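/- arXiv:2502.04549 — 5 statements merged into one kernel-verified Lean document; each statement's English description precedes it below -/
import Mathlib

section
/- Let (p_b, p_1, …, p_k) be probability densities on ℝ^n that are Factorized Conditionals with respect to a partition {M_b, M_1, …, M_k} of the coordinates. Then the composed density satisfies, for all x ∈ ℝ^n, C[p_b, p_1, …, p_k](x) = p_b(x|_{M_b}) · ∏_{i=1}^k p_i(x|_{M_i}) (with normalization constant Z = 1). In particular, the marginal of the composed distribution on the coordinates M_i equals the marginal of p_i on M_i for every i = 1,…,k, i.e. the composition is a projective composition with respect to the coordinate projections Π_i(x) = x|_{M_i}. -/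
open MeasureTheory Finset Real

noncomputable section

/-- The marginal density of `p` on the coordinates in `S`: integrate out the
coordinates outside `S`. The result depends only on the coordinates of `x` in `S`. -/
def marginal {n : ℕ} (S : Finset (Fin n)) (p : (Fin n → ℝ) → ℝ) (x : Fin n → ℝ) : ℝ :=
  ∫ y : {i : Fin n // i ∉ S} → ℝ,
    p (fun i => if h : i ∈ S then x i else y ⟨i, h⟩)

/-- `p` is a probability density on `ℝ^n`. -/
def IsDensity {n : ℕ} (p : (Fin n → ℝ) → ℝ) : Prop :=
  (∀ x, 0 ≤ p x) ∧ Integrable p ∧ (∫ x, p x) = 1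

/-- `Mb, M 1, …, M k` form a partition of the coordinates `{1,…,n}`. -/
def IsCoordPartition {n k : ℕ} (Mb : Finset (Fin n)) (M : Fin k → Finset (Fin n)) : Prop :=
  (∀ i, Disjoint Mb (M i)) ∧ (∀ i j, i ≠ j → Disjoint (M i) (M j)) ∧
    Mb ∪ Finset.univ.biUnion M = Finset.univ

/-- Factorized Conditionals: each `p i` samples the coordinates `M i` in its own way and
the remaining coordinates as the background `pb`, and the blocks are independent under `pb`. -/
def FactorizedConditionals {n k : ℕ} (Mb : Finset (Fin n)) (M : Fin k → Finset (Fin n))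
    (pb : (Fin n → ℝ) → ℝ) (p : Fin k → (Fin n → ℝ) → ℝ) : Prop :=
  IsCoordPartition Mb M ∧
  (∀ i x, p i x = marginal (M i) (p i) x * marginal (M i)ᶜ pb x) ∧
  (∀ x, pb x = marginal Mb pb x * ∏ i, marginal (M i) pb x)

/-- The unnormalized composition `pb(x) ∏ i, p i (x) / pb(x)`. -/
def compRaw {n k : ℕ} (pb : (Fin n → ℝ) → ℝ) (p : Fin k → (Fin n → ℝ) → ℝ)
    (x : Fin n → ℝ) : ℝ :=
  pb x * ∏ i, p i x / pb x

/-- The composition operator `C[pb, p 1, …, p k]`, normalized to a probability density. -/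
def comp {n k : ℕ} (pb : (Fin n → ℝ) → ℝ) (p : Fin k → (Fin n → ℝ) → ℝ)
    (x : Fin n → ℝ) : ℝ :=
  compRaw pb p x / ∫ y, compRaw pb p y


namespace CompAux

variable {n : ℕ}

def DOn (S : Finset (Fin n)) (q : (Fin n → ℝ) → ℝ) : Prop :=
  ∀ x y : Fin n → ℝ, (∀ i ∈ S, x i = y i) → q x = q y

theorem DOn.mono {S T : Finset (Fin n)} (h : S ⊆ T) {q} (hq : DOn S q) : DOn T q :=
  fun x y hxy => hq x y fun i hi => hxy i (h hi)

theorem DOn.mul {S : Finset (Fin n)} {A B} (hA : DOn S A) (hB : DOn S B) :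
    DOn S fun x => A x * B x := fun x y h => by
  show A x * B x = A y * B y
  rw [hA x y h, hB x y h]

theorem DOn.prod {S : Finset (Fin n)} {ι : Type*} (t : Finset ι) (F : ι → (Fin n → ℝ) → ℝ)
    (h : ∀ j ∈ t, DOn S (F j)) : DOn S fun x => ∏ j ∈ t, F j x := fun x y hxy =>
  Finset.prod_congr rfl fun j hj => h j hj x y hxy

def eS (S : Finset (Fin n)) :
    (Fin n → ℝ) ≃ᵐ ({i : Fin n // i ∈ S} → ℝ) × ({i : Fin n // i ∉ S} → ℝ) :=
  MeasurableEquiv.piEquivPiSubtypeProd (fun _ => ℝ) (fun i => i ∈ S)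

theorem eS_symm_apply (S : Finset (Fin n)) (a b) :
    (eS S).symm (a, b) = fun i => if h : i ∈ S then a ⟨i, h⟩ else b ⟨i, h⟩ := rfl

theorem eS_mp (S : Finset (Fin n)) : MeasurePreserving (eS S) volume volume := by
  have h := volume_preserving_piEquivPiSubtypeProd (fun _ : Fin n => ℝ) (fun i => i ∈ S)
  convert h
  all_goals rfl

theorem marginal_eq (S : Finset (Fin n)) (q : (Fin n → ℝ) → ℝ) (x : Fin n → ℝ) :
    marginal S q x = ∫ y, q ((eS S).symm (fun j : {i : Fin n // i ∈ S} => x j.1, y)) := rfl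

theorem symm_apply_mem {S : Finset (Fin n)} (a b) {l : Fin n} (h : l ∈ S) :
    (eS S).symm (a, b) l = a ⟨l, h⟩ := by rw [eS_symm_apply]; exact dif_pos h

theorem symm_apply_not_mem {S : Finset (Fin n)} (a b) {l : Fin n} (h : l ∉ S) :
    (eS S).symm (a, b) l = b ⟨l, h⟩ := by rw [eS_symm_apply]; exact dif_neg h

theorem marginal_symm (S : Finset (Fin n)) (q : (Fin n → ℝ) → ℝ) (a b) :
    marginal S q ((eS S).symm (a, b)) = ∫ y, q ((eS S).symm (a, y)) := by
  have h : (fun j : {i : Fin n // i ∈ S} => ((eS S).symm (a, b)) j.1) = a := by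
    funext j; exact symm_apply_mem a b j.2
  rw [marginal_eq, h]

theorem DOn.eval_fst {S : Finset (Fin n)} {B} (hB : DOn S B) (a b b') :
    B ((eS S).symm (a, b)) = B ((eS S).symm (a, b')) :=
  hB _ _ fun i hi => by rw [symm_apply_mem a b hi, symm_apply_mem a b' hi]

theorem DOn.eval_snd {S : Finset (Fin n)} {A} (hA : DOn Sᶜ A) (a a' b) :
    A ((eS S).symm (a, b)) = A ((eS S).symm (a', b)) :=
  hA _ _ fun i hi => by
    have h : i ∉ S := Finset.mem_compl.mp hi
    rw [symm_apply_not_mem a b h, symm_apply_not_mem a' b h]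

theorem integral_block {S : Finset (Fin n)} {q : (Fin n → ℝ) → ℝ} (hq : Integrable q) (b) :
    (∫ a, marginal S q ((eS S).symm (a, b))) = ∫ x, q x := by
  have hmp := MeasurePreserving.symm _ (eS_mp S)
  have hint : Integrable (fun z => q ((eS S).symm z)) volume :=
    (hmp.integrable_comp_emb (MeasurableEquiv.measurableEmbedding _)).mpr hq
  simp_rw [marginal_symm]
  rw [← hmp.integral_comp' (g := q)]
  rw [Measure.volume_eq_prod] at hint ⊢
  exact integral_integral hint

theorem split (S : Finset (Fin n)) {A B : (Fin n → ℝ) → ℝ} (hA : DOn Sᶜ A) (hB : DOn S B) :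
    ∫ x, A x * B x =
      (∫ a, B ((eS S).symm (a, 0))) * ∫ b, A ((eS S).symm (0, b)) := by
  rw [← (MeasurePreserving.symm _ (eS_mp S)).integral_comp' (g := fun x => A x * B x)]
  have h1 : (fun z : ({i : Fin n // i ∈ S} → ℝ) × ({i : Fin n // i ∉ S} → ℝ) =>
      A ((eS S).symm z) * B ((eS S).symm z))
      = fun z => B ((eS S).symm (z.1, 0)) * A ((eS S).symm (0, z.2)) := by
    funext z
    obtain ⟨a, b⟩ := z
    rw [hB.eval_fst a b 0, hA.eval_snd a 0 b, mul_comm]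
  show (∫ z, A ((eS S).symm z) * B ((eS S).symm z)) = _
  rw [h1, Measure.volume_eq_prod,
    integral_prod_mul (fun a => B ((eS S).symm (a, 0))) (fun b => A ((eS S).symm (0, b)))]

theorem dOn_marginal (S : Finset (Fin n)) (q : (Fin n → ℝ) → ℝ) : DOn S (marginal S q) := by
  intro x y h
  unfold marginal
  congr 1
  funext z
  congr 1
  funext i
  by_cases hi : i ∈ S
  · simp only [dif_pos hi]; exact h i hi
  · simp only [dif_neg hi]

end CompAux

open CompAux in
/-- **Correctness of Composition.** If `(pb, p 1, …, p k)` are Factorized Conditionals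
with respect to the partition `{Mb, M 1, …, M k}`, then the composed density equals
`pb(x|Mb) ∏ i, p i (x|M i)` (with normalization constant `Z = 1`), and in particular its
marginal on `M i` equals that of `p i`, i.e. it is a projective composition w.r.t. the
coordinate projections. -/
theorem statement_0 {n k : ℕ} (Mb : Finset (Fin n)) (M : Fin k → Finset (Fin n))
    (pb : (Fin n → ℝ) → ℝ) (p : Fin k → (Fin n → ℝ) → ℝ)
    (hpb : IsDensity pb) (hp : ∀ i, IsDensity (p i))
    (hpbpos : ∀ x, 0 < pb x)
    (hFC : FactorizedConditionals Mb M pb p) :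
    (∫ x, compRaw pb p x) = 1 ∧
    (∀ x, compRaw pb p x = marginal Mb pb x * ∏ i, marginal (M i) (p i) x) ∧
    (∀ i x, marginal (M i) (compRaw pb p) x = marginal (M i) (p i) x) := by
  obtain ⟨⟨hd1, hd2, -⟩, hp2, hpb3⟩ := hFC
  obtain ⟨hpb0, hpbInt, hpbI⟩ := hpb
  classical
  -- subset facts
  have hsub_b : ∀ i : Fin k, Mb ⊆ (M i)ᶜ := fun i l hl =>
    Finset.mem_compl.mpr fun hm => (Finset.disjoint_left.mp (hd1 i)) hl hm
  have hsub : ∀ i j : Fin k, j ≠ i → M j ⊆ (M i)ᶜ := fun i j hji l hl =>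
    Finset.mem_compl.mpr fun hm => (Finset.disjoint_left.mp (hd2 j i hji)) hl hm
  have hA_dOn : ∀ (i : Fin k) (F : Fin k → (Fin n → ℝ) → ℝ), (∀ j, DOn (M j) (F j)) →
      DOn (M i)ᶜ (fun x => marginal Mb pb x * ∏ j ∈ univ.erase i, F j x) := by
    intro i F hF
    apply DOn.mul ((dOn_marginal Mb pb).mono (hsub_b i))
    apply DOn.prod
    intro j hj
    exact (hF j).mono (hsub i j (Finset.ne_of_mem_erase hj))
  -- block integrals
  have hblock_f : ∀ i : Fin k, (∫ a, marginal (M i) pb ((eS (M i)).symm (a, 0))) = 1 :=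
    fun i => (integral_block hpbInt 0).trans hpbI
  have hblock_g : ∀ i : Fin k, (∫ a, marginal (M i) (p i) ((eS (M i)).symm (a, 0))) = 1 :=
    fun i => (integral_block (hp i).2.1 0).trans (hp i).2.2
  -- positivity
  have hnn : ∀ (S : Finset (Fin n)) (q : (Fin n → ℝ) → ℝ), (∀ z, 0 ≤ q z) →
      ∀ x, 0 ≤ marginal S q x := fun S q h x => integral_nonneg fun y => h _
  have hfb_pos : ∀ x, 0 < marginal Mb pb x := by
    intro x
    rcases (hnn Mb pb hpb0 x).lt_or_eq with h | h
    · exact h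
    · exfalso
      have hx := hpbpos x
      rw [hpb3 x, ← h, zero_mul] at hx
      exact lt_irrefl 0 hx
  have hf_pos : ∀ (i : Fin k) x, 0 < marginal (M i) pb x := by
    intro i x
    rcases (hnn (M i) pb hpb0 x).lt_or_eq with h | h
    · exact h
    · exfalso
      have hx := hpbpos x
      rw [hpb3 x, Finset.prod_eq_zero (mem_univ i) h.symm, mul_zero] at hx
      exact lt_irrefl 0 hx
  have hpb_split : ∀ (i : Fin k) x,
      pb x = (marginal Mb pb x * ∏ j ∈ univ.erase i, marginal (M j) pb x) *
        marginal (M i) pb x := by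
    intro i x
    rw [hpb3 x, ← Finset.mul_prod_erase univ (fun j => marginal (M j) pb x) (mem_univ i)]
    ring
  -- the "rest" integral for pb equals 1
  have hCA : ∀ i : Fin k,
      (∫ b, (marginal Mb pb ((eS (M i)).symm (0, b)) *
        ∏ j ∈ univ.erase i, marginal (M j) pb ((eS (M i)).symm (0, b)))) = 1 := by
    intro i
    have hs := split (M i) (hA_dOn i (fun j => marginal (M j) pb)
      (fun j => dOn_marginal (M j) pb)) (dOn_marginal (M i) pb)
    have hl : (∫ x, (marginal Mb pb x * ∏ j ∈ univ.erase i, marginal (M j) pb x) *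
        marginal (M i) pb x) = 1 := by
      rw [← hpbI]
      congr 1
      funext x
      exact (hpb_split i x).symm
    rw [hl, hblock_f i, one_mul] at hs
    exact hs.symm
  -- the factorization of the complement marginal
  have hCi : ∀ (i : Fin k) x, marginal (M i)ᶜ pb x =
      marginal Mb pb x * ∏ j ∈ univ.erase i, marginal (M j) pb x := by
    intro i
    have step1 : ∀ x, marginal (M i)ᶜ pb x =
        (marginal Mb pb x * ∏ j ∈ univ.erase i, marginal (M j) pb x) *
          marginal (M i)ᶜ (marginal (M i) pb) 0 := by
      intro x
      have hptw : ∀ y : {l : Fin n // l ∉ (M i)ᶜ} → ℝ,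
          pb (fun l => if h : l ∈ (M i)ᶜ then x l else y ⟨l, h⟩)
            = (marginal Mb pb x * ∏ j ∈ univ.erase i, marginal (M j) pb x) *
              marginal (M i) pb
                (fun l => if h : l ∈ (M i)ᶜ then (0 : Fin n → ℝ) l else y ⟨l, h⟩) := by
        intro y
        set z : Fin n → ℝ := fun l => if h : l ∈ (M i)ᶜ then x l else y ⟨l, h⟩ with hz
        set z0 : Fin n → ℝ := fun l => if h : l ∈ (M i)ᶜ then (0 : Fin n → ℝ) l else y ⟨l, h⟩
          with hz0
        have hMbz : marginal Mb pb z = marginal Mb pb x :=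
          dOn_marginal Mb pb z x fun l hl => by
            simp only [hz]; exact dif_pos (hsub_b i hl)
        have hjz : ∀ j ∈ univ.erase i, marginal (M j) pb z = marginal (M j) pb x := fun j hj =>
          dOn_marginal (M j) pb z x fun l hl => by
            simp only [hz]; exact dif_pos (hsub i j (Finset.ne_of_mem_erase hj) hl)
        have hiz : marginal (M i) pb z = marginal (M i) pb z0 :=
          dOn_marginal (M i) pb z z0 fun l hl => by
            have hlc : l ∉ (M i)ᶜ := fun hc => (Finset.mem_compl.mp hc) hl
            simp only [hz, hz0, dif_neg hlc]
        rw [hpb3 z, ← Finset.mul_prod_erase univ (fun j => marginal (M j) pb z) (mem_univ i),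
          hMbz, hiz, Finset.prod_congr rfl hjz]
        ring
      have unf : marginal (M i)ᶜ pb x = ∫ y : {l : Fin n // l ∉ (M i)ᶜ} → ℝ,
          pb fun l => if h : l ∈ (M i)ᶜ then x l else y ⟨l, h⟩ := rfl
      rw [unf]
      calc (∫ y : {l : Fin n // l ∉ (M i)ᶜ} → ℝ,
              pb fun l => if h : l ∈ (M i)ᶜ then x l else y ⟨l, h⟩)
          = ∫ y : {l : Fin n // l ∉ (M i)ᶜ} → ℝ,
              (marginal Mb pb x * ∏ j ∈ univ.erase i, marginal (M j) pb x) *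
                marginal (M i) pb
                  (fun l => if h : l ∈ (M i)ᶜ then (0 : Fin n → ℝ) l else y ⟨l, h⟩) := by
            congr 1; funext y; exact hptw y
        _ = (marginal Mb pb x * ∏ j ∈ univ.erase i, marginal (M j) pb x) *
              marginal (M i)ᶜ (marginal (M i) pb) 0 := integral_const_mul _ _
    have hCi1 : marginal (M i)ᶜ (marginal (M i) pb) 0 = 1 := by
      have h1 : ∀ x, p i x = marginal (M i)ᶜ (marginal (M i) pb) 0 *
          ((marginal Mb pb x * ∏ j ∈ univ.erase i, marginal (M j) pb x) *
            marginal (M i) (p i) x) := by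
        intro x; rw [hp2 i x, step1 x]; ring
      have h2 : (1 : ℝ) = marginal (M i)ᶜ (marginal (M i) pb) 0 *
          ∫ x, (marginal Mb pb x * ∏ j ∈ univ.erase i, marginal (M j) pb x) *
            marginal (M i) (p i) x := by
        rw [← (hp i).2.2, ← integral_const_mul]
        congr 1; funext x; exact h1 x
      have h3 := split (M i) (hA_dOn i (fun j => marginal (M j) pb)
        (fun j => dOn_marginal (M j) pb)) (dOn_marginal (M i) (p i))
      rw [h3, hblock_g i, one_mul, hCA i, mul_one] at h2
      exact h2.symm
    intro x
    rw [step1 x, hCi1, mul_one]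
  -- pointwise formula
  have hpoint : ∀ x, compRaw pb p x = marginal Mb pb x * ∏ i, marginal (M i) (p i) x := by
    intro x
    have hratio : ∀ i : Fin k, p i x / pb x =
        marginal (M i) (p i) x / marginal (M i) pb x := by
      intro i
      have h1 : marginal Mb pb x * ∏ j ∈ univ.erase i, marginal (M j) pb x ≠ 0 :=
        (mul_pos (hfb_pos x) (Finset.prod_pos fun j _ => hf_pos j x)).ne'
      rw [hp2 i x, hCi i x, hpb_split i x, mul_comm (marginal (M i) (p i) x)]
      exact mul_div_mul_left _ _ h1
    have hPf : (∏ i, marginal (M i) pb x) ≠ 0 :=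
      (Finset.prod_pos fun i _ => hf_pos i x).ne'
    simp only [compRaw]
    rw [Finset.prod_congr rfl fun i _ => hratio i, hpb3 x, Finset.prod_div_distrib,
      mul_assoc, mul_comm (∏ i, marginal (M i) pb x), div_mul_cancel₀ _ hPf]
  -- telescoping: total integral is 1
  have hGstep : ∀ m : ℕ, (∫ x, marginal Mb pb x * ∏ i : Fin k,
      (if (i : ℕ) < m + 1 then marginal (M i) (p i) x else marginal (M i) pb x))
      = ∫ x, marginal Mb pb x * ∏ i : Fin k,
      (if (i : ℕ) < m then marginal (M i) (p i) x else marginal (M i) pb x) := by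
    intro m
    by_cases hm : m < k
    · set i : Fin k := ⟨m, hm⟩ with hi
      have hF : ∀ j : Fin k, DOn (M j)
          (fun x => if (j : ℕ) < m then marginal (M j) (p j) x else marginal (M j) pb x) := by
        intro j
        by_cases hc : (j : ℕ) < m
        · simp only [if_pos hc]; exact dOn_marginal _ _
        · simp only [if_neg hc]; exact dOn_marginal _ _
      have hA := hA_dOn i
        (fun j x => if (j : ℕ) < m then marginal (M j) (p j) x else marginal (M j) pb x) hF
      have hm1 : ∀ x, marginal Mb pb x * ∏ j : Fin k,
          (if (j : ℕ) < m then marginal (M j) (p j) x else marginal (M j) pb x)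
          = (marginal Mb pb x * ∏ j ∈ univ.erase i,
              (if (j : ℕ) < m then marginal (M j) (p j) x else marginal (M j) pb x)) *
            marginal (M i) pb x := by
        intro x
        rw [← Finset.mul_prod_erase univ
          (fun j : Fin k => if (j : ℕ) < m then marginal (M j) (p j) x else marginal (M j) pb x)
          (mem_univ i)]
        have hnc : ¬ ((i : ℕ) < m) := by rw [hi]; exact lt_irrefl m
        rw [if_neg hnc]
        ring
      have hm2 : ∀ x, marginal Mb pb x * ∏ j : Fin k,
          (if (j : ℕ) < m + 1 then marginal (M j) (p j) x else marginal (M j) pb x)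
          = (marginal Mb pb x * ∏ j ∈ univ.erase i,
              (if (j : ℕ) < m then marginal (M j) (p j) x else marginal (M j) pb x)) *
            marginal (M i) (p i) x := by
        intro x
        rw [← Finset.mul_prod_erase univ
          (fun j : Fin k => if (j : ℕ) < m + 1 then marginal (M j) (p j) x else marginal (M j) pb x)
          (mem_univ i)]
        have hc : (i : ℕ) < m + 1 := by rw [hi]; exact Nat.lt_succ_self m
        rw [if_pos hc]
        have herase : ∀ j ∈ univ.erase i,
            (if (j : ℕ) < m + 1 then marginal (M j) (p j) x else marginal (M j) pb x)
            = (if (j : ℕ) < m then marginal (M j) (p j) x else marginal (M j) pb x) := by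
          intro j hj
          have hji : (j : ℕ) ≠ m := by
            intro h
            exact (Finset.mem_erase.mp hj).1 (by rw [hi]; exact Fin.ext h)
          by_cases hc2 : (j : ℕ) < m
          · rw [if_pos hc2, if_pos (by omega)]
          · rw [if_neg hc2, if_neg (by omega)]
        rw [Finset.prod_congr rfl herase]
        ring
      have s1 := split (M i) hA (dOn_marginal (M i) pb)
      have s2 := split (M i) hA (dOn_marginal (M i) (p i))
      calc (∫ x, marginal Mb pb x * ∏ j : Fin k,
              (if (j : ℕ) < m + 1 then marginal (M j) (p j) x else marginal (M j) pb x))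
          = ∫ x, (marginal Mb pb x * ∏ j ∈ univ.erase i,
              (if (j : ℕ) < m then marginal (M j) (p j) x else marginal (M j) pb x)) *
            marginal (M i) (p i) x := by
            congr 1; funext x; exact hm2 x
        _ = (∫ a, marginal (M i) (p i) ((eS (M i)).symm (a, 0))) *
            ∫ b, marginal Mb pb ((eS (M i)).symm (0, b)) * ∏ j ∈ univ.erase i,
              (if (j : ℕ) < m then marginal (M j) (p j) ((eS (M i)).symm (0, b))
                else marginal (M j) pb ((eS (M i)).symm (0, b))) := s2
        _ = (∫ a, marginal (M i) pb ((eS (M i)).symm (a, 0))) *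
            ∫ b, marginal Mb pb ((eS (M i)).symm (0, b)) * ∏ j ∈ univ.erase i,
              (if (j : ℕ) < m then marginal (M j) (p j) ((eS (M i)).symm (0, b))
                else marginal (M j) pb ((eS (M i)).symm (0, b))) := by
            rw [hblock_g i, hblock_f i]
        _ = ∫ x, (marginal Mb pb x * ∏ j ∈ univ.erase i,
              (if (j : ℕ) < m then marginal (M j) (p j) x else marginal (M j) pb x)) *
            marginal (M i) pb x := s1.symm
        _ = ∫ x, marginal Mb pb x * ∏ j : Fin k,
              (if (j : ℕ) < m then marginal (M j) (p j) x else marginal (M j) pb x) := by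
            congr 1; funext x; exact (hm1 x).symm
    · push_neg at hm
      congr 1
      funext x
      congr 1
      apply Finset.prod_congr rfl
      intro j _
      have h1 : (j : ℕ) < m := lt_of_lt_of_le j.2 hm
      rw [if_pos h1, if_pos (by omega)]
  have hGint : ∀ m : ℕ, (∫ x, marginal Mb pb x * ∏ i : Fin k,
      (if (i : ℕ) < m then marginal (M i) (p i) x else marginal (M i) pb x)) = 1 := by
    intro m
    induction m with
    | zero =>
      have h0 : (∫ x, marginal Mb pb x * ∏ i : Fin k,
          (if (i : ℕ) < 0 then marginal (M i) (p i) x else marginal (M i) pb x))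
          = ∫ x, pb x := by
        congr 1
        funext x
        simp only [Nat.not_lt_zero, if_false]
        exact (hpb3 x).symm
      rw [h0, hpbI]
    | succ m ih => rw [hGstep m, ih]
  have hint1 : (∫ x, compRaw pb p x) = 1 := by
    rw [← hGint k]
    congr 1
    funext x
    rw [hpoint x]
    congr 1
    apply Finset.prod_congr rfl
    intro j _
    rw [if_pos j.2]
  refine ⟨hint1, hpoint, ?_⟩
  -- marginals of the composition
  intro i x
  have hA0 : DOn (M i)ᶜ (fun z => marginal Mb pb z * ∏ j ∈ univ.erase i,
      marginal (M j) (p j) z) :=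
    hA_dOn i (fun j => marginal (M j) (p j)) (fun j => dOn_marginal _ _)
  have hcw : ∀ z, compRaw pb p z =
      (marginal Mb pb z * ∏ j ∈ univ.erase i, marginal (M j) (p j) z) *
        marginal (M i) (p i) z := by
    intro z
    rw [hpoint z, ← Finset.mul_prod_erase univ (fun j => marginal (M j) (p j) z) (mem_univ i)]
    ring
  have hs := split (M i) hA0 (dOn_marginal (M i) (p i))
  have h1 : (∫ z, (marginal Mb pb z * ∏ j ∈ univ.erase i, marginal (M j) (p j) z) *
      marginal (M i) (p i) z) = 1 := by
    rw [← hint1]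
    congr 1
    funext z
    exact (hcw z).symm
  rw [h1, hblock_g i, one_mul] at hs
  have hCA0 : (∫ b, marginal Mb pb ((eS (M i)).symm (0, b)) * ∏ j ∈ univ.erase i,
      marginal (M j) (p j) ((eS (M i)).symm (0, b))) = 1 := hs.symm
  have hptw : ∀ y : {l : Fin n // l ∉ M i} → ℝ,
      compRaw pb p (fun l => if h : l ∈ M i then x l else y ⟨l, h⟩)
        = marginal (M i) (p i) x *
          (marginal Mb pb ((eS (M i)).symm (0, y)) * ∏ j ∈ univ.erase i,
            marginal (M j) (p j) ((eS (M i)).symm (0, y))) := by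
    intro y
    set z : Fin n → ℝ := fun l => if h : l ∈ M i then x l else y ⟨l, h⟩ with hz
    have hgz : marginal (M i) (p i) z = marginal (M i) (p i) x :=
      dOn_marginal _ _ z x fun l hl => by simp only [hz]; exact dif_pos hl
    have hAz : (fun w => marginal Mb pb w * ∏ j ∈ univ.erase i, marginal (M j) (p j) w) z
        = (fun w => marginal Mb pb w * ∏ j ∈ univ.erase i, marginal (M j) (p j) w)
          ((eS (M i)).symm (0, y)) := by
      apply hA0
      intro l hl
      have hl' : l ∉ M i := Finset.mem_compl.mp hl
      simp only [hz]
      rw [dif_neg hl', symm_apply_not_mem _ _ hl']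
    rw [hcw z, hgz]
    have hAz' := hAz
    simp only at hAz'
    rw [hAz', mul_comm]
  calc marginal (M i) (compRaw pb p) x
      = ∫ y : {l : Fin n // l ∉ M i} → ℝ,
          compRaw pb p (fun l => if h : l ∈ M i then x l else y ⟨l, h⟩) := rfl
    _ = ∫ y : {l : Fin n // l ∉ M i} → ℝ, marginal (M i) (p i) x *
          (marginal Mb pb ((eS (M i)).symm (0, y)) * ∏ j ∈ univ.erase i,
            marginal (M j) (p j) ((eS (M i)).symm (0, y))) := by
        congr 1; funext y; exact hptw y
    _ = marginal (M i) (p i) x *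
          ∫ y, marginal Mb pb ((eS (M i)).symm (0, y)) * ∏ j ∈ univ.erase i,
            marginal (M j) (p j) ((eS (M i)).symm (0, y)) := integral_const_mul _ _
    _ = marginal (M i) (p i) x := by rw [hCA0, mul_one]
end
end

section
/- Let (p_b, p_1, …, p_k) be probability densities on ℝ^n that are Factorized Conditionals with respect to a partition {M_b, M_1, …, M_k}. Then for every σ > 0 the Gaussian-noised densities (N_σ[p_b], N_σ[p_1], …, N_σ[p_k]) are again Factorized Conditionals with respect to the same partition, and the composition operator commutes with Gaussian noising: C[N_σ[p_b], N_σ[p_1], …, N_σ[p_k]] = N_σ[C[p_b, p_1, …, p_k]]. -/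
open MeasureTheory Finset Real

noncomputable section

/-- The isotropic Gaussian density `N(0, σ² I)` on `ℝ^n`. -/
def gaussIso {n : ℕ} (σ : ℝ) (x : Fin n → ℝ) : ℝ :=
  (2 * π * σ ^ 2) ^ (-(n : ℝ) / 2) * Real.exp (-(∑ i, (x i) ^ 2) / (2 * σ ^ 2))

/-- Gaussian noising `N_σ[p]`: convolution of `p` with `N(0, σ² I)`. -/
def noise {n : ℕ} (σ : ℝ) (p : (Fin n → ℝ) → ℝ) (x : Fin n → ℝ) : ℝ :=
  ∫ y, p y * gaussIso σ (x - y)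

namespace FCAux

variable {n : ℕ}

/-- `f` depends only on the coordinates in `S`. -/
def DepOn (S : Finset (Fin n)) (f : (Fin n → ℝ) → ℝ) : Prop :=
  ∀ x y : Fin n → ℝ, (∀ i ∈ S, x i = y i) → f x = f y

theorem DepOn.mono {S T : Finset (Fin n)} {f} (hST : S ⊆ T) (h : DepOn S f) : DepOn T f :=
  fun x y hxy => h x y fun i hi => hxy i (hST hi)

theorem DepOn.mul {S : Finset (Fin n)} {f g} (hf : DepOn S f) (hg : DepOn S g) :
    DepOn S (fun x => f x * g x) := fun x y h => by simp only; rw [hf x y h, hg x y h]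

theorem DepOn.prod {S : Finset (Fin n)} {ι : Type*} (t : Finset ι) (f : ι → (Fin n → ℝ) → ℝ)
    (hf : ∀ i ∈ t, DepOn S (f i)) : DepOn S (fun x => ∏ i ∈ t, f i x) :=
  fun x y h => Finset.prod_congr rfl fun i hi => hf i hi x y h

theorem DepOn.const_mul {S : Finset (Fin n)} {f} (c : ℝ) (hf : DepOn S f) :
    DepOn S (fun x => c * f x) := fun x y h => by simp only; rw [hf x y h]

theorem marginal_nonneg {S : Finset (Fin n)} {p} (hp : ∀ y, 0 ≤ p y) (x : Fin n → ℝ) :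
    0 ≤ marginal S p x := integral_nonneg fun y => hp _

theorem marginal_depOn (S : Finset (Fin n)) (p : (Fin n → ℝ) → ℝ) : DepOn S (marginal S p) := by
  intro x y h
  unfold marginal
  congr 1
  funext z
  congr 1
  funext i
  by_cases hi : i ∈ S
  · simp only [dif_pos hi]; exact h i hi
  · simp only [dif_neg hi]

theorem marginal_mul {T : Finset (Fin n)} {u v : (Fin n → ℝ) → ℝ}
    (hu : DepOn Tᶜ u) (hv : DepOn T v) (x : Fin n → ℝ) :
    marginal T (fun z => u z * v z) x
      = (∫ y : {i : Fin n // i ∉ T} → ℝ, u (fun i => if h : i ∈ T then 0 else y ⟨i, h⟩)) * v x := by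
  unfold marginal
  have key : ∀ y : {i : Fin n // i ∉ T} → ℝ,
      u (fun i => if h : i ∈ T then x i else y ⟨i, h⟩) * v (fun i => if h : i ∈ T then x i else y ⟨i, h⟩)
      = u (fun i => if h : i ∈ T then 0 else y ⟨i, h⟩) * v x := by
    intro y
    have h1 : u (fun i => if h : i ∈ T then x i else y ⟨i, h⟩)
        = u (fun i => if h : i ∈ T then 0 else y ⟨i, h⟩) := by
      apply hu
      intro i hi
      have : i ∉ T := Finset.mem_compl.mp hi
      simp only [dif_neg this]
    have h2 : v (fun i => if h : i ∈ T then x i else y ⟨i, h⟩) = v x := by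
      apply hv
      intro i hi
      simp only [dif_pos hi]
    rw [h1, h2]
  simp only [key]
  exact integral_mul_const _ _


/-! ### Gaussian kernels -/

/-- one-dimensional gaussian density -/
def oneG (σ t : ℝ) : ℝ :=
  (2 * π * σ ^ 2) ^ (-(1 : ℝ) / 2) * Real.exp (-(t ^ 2) / (2 * σ ^ 2))

/-- the block gaussian kernel -/
def kern (σ : ℝ) (S : Finset (Fin n)) (x y : Fin n → ℝ) : ℝ :=
  (2 * π * σ ^ 2) ^ (-(S.card : ℝ) / 2) * Real.exp (-(∑ i ∈ S, (x i - y i) ^ 2) / (2 * σ ^ 2))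

variable {σ : ℝ}

theorem base_pos (hσ : 0 < σ) : 0 < 2 * π * σ ^ 2 := by positivity

theorem oneG_pos (hσ : 0 < σ) (t : ℝ) : 0 < oneG σ t :=
  mul_pos (Real.rpow_pos_of_pos (base_pos hσ) _) (Real.exp_pos _)

theorem kern_pos (hσ : 0 < σ) (S : Finset (Fin n)) (x y : Fin n → ℝ) : 0 < kern σ S x y :=
  mul_pos (Real.rpow_pos_of_pos (base_pos hσ) _) (Real.exp_pos _)

theorem kern_nonneg (hσ : 0 < σ) (S : Finset (Fin n)) (x y : Fin n → ℝ) : 0 ≤ kern σ S x y :=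
  (kern_pos hσ S x y).le

theorem kern_le (hσ : 0 < σ) (S : Finset (Fin n)) (x y : Fin n → ℝ) :
    kern σ S x y ≤ (2 * π * σ ^ 2) ^ (-(S.card : ℝ) / 2) := by
  have h1 : Real.exp (-(∑ i ∈ S, (x i - y i) ^ 2) / (2 * σ ^ 2)) ≤ 1 := by
    rw [Real.exp_le_one_iff]
    apply div_nonpos_of_nonpos_of_nonneg
    · simp only [neg_nonpos]
      exact Finset.sum_nonneg fun i _ => sq_nonneg _
    · positivity
  calc kern σ S x y ≤ (2 * π * σ ^ 2) ^ (-(S.card : ℝ) / 2) * 1 :=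
        mul_le_mul_of_nonneg_left h1 (Real.rpow_pos_of_pos (base_pos hσ) _).le
    _ = _ := mul_one _

theorem kern_congr (σ : ℝ) {S : Finset (Fin n)} {x x' y y' : Fin n → ℝ}
    (hx : ∀ i ∈ S, x i = x' i) (hy : ∀ i ∈ S, y i = y' i) :
    kern σ S x y = kern σ S x' y' := by
  unfold kern
  have : ∑ i ∈ S, (x i - y i) ^ 2 = ∑ i ∈ S, (x' i - y' i) ^ 2 :=
    Finset.sum_congr rfl fun i hi => by rw [hx i hi, hy i hi]
  rw [this]

theorem kern_depOn (σ : ℝ) (S : Finset (Fin n)) (x : Fin n → ℝ) :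
    DepOn S (fun y => kern σ S x y) :=
  fun y y' h => kern_congr σ (fun _ _ => rfl) h

theorem kern_union (hσ : 0 < σ) {S T : Finset (Fin n)} (hST : Disjoint S T) (x y : Fin n → ℝ) :
    kern σ (S ∪ T) x y = kern σ S x y * kern σ T x y := by
  unfold kern
  rw [Finset.card_union_of_disjoint hST, Finset.sum_union hST]
  rw [show (-(((S.card : ℕ) + T.card : ℕ) : ℝ) / 2) = (-(S.card : ℝ) / 2) + (-(T.card : ℝ) / 2) by
    push_cast; ring]
  rw [Real.rpow_add (base_pos hσ)]
  rw [show (-((∑ i ∈ S, (x i - y i) ^ 2) + ∑ i ∈ T, (x i - y i) ^ 2) / (2 * σ ^ 2))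
      = (-(∑ i ∈ S, (x i - y i) ^ 2) / (2 * σ ^ 2)) + (-(∑ i ∈ T, (x i - y i) ^ 2) / (2 * σ ^ 2)) by
    ring]
  rw [Real.exp_add]
  ring

theorem kern_as_prod (hσ : 0 < σ) (S : Finset (Fin n)) (x y : Fin n → ℝ) :
    kern σ S x y = ∏ i ∈ S, oneG σ (x i - y i) := by
  unfold kern oneG
  rw [Finset.prod_mul_distrib, Finset.prod_const, ← Real.exp_sum]
  congr 1
  · rw [← Real.rpow_natCast ((2 * π * σ ^ 2) ^ (-(1:ℝ)/2)) S.card,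
      ← Real.rpow_mul (base_pos hσ).le]
    congr 1
    ring
  · congr 1
    rw [← Finset.sum_div, Finset.sum_neg_distrib, neg_div]

theorem kern_empty (σ : ℝ) (x y : Fin n → ℝ) : kern σ ∅ x y = 1 := by
  unfold kern
  simp

theorem gauss_eq_kern_univ (σ : ℝ) (x y : Fin n → ℝ) :
    gaussIso σ (x - y) = kern σ Finset.univ x y := by
  unfold gaussIso kern
  rw [Finset.card_univ, Fintype.card_fin]
  have : ∑ i, ((x - y) i) ^ 2 = ∑ i : Fin n, (x i - y i) ^ 2 :=
    Finset.sum_congr rfl fun i _ => by rw [Pi.sub_apply]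
  rw [this]


/-! ### integrability and total mass of gaussians -/

theorem oneG_integrable (hσ : 0 < σ) : Integrable (oneG σ) := by
  have hb : (0:ℝ) < 1 / (2 * σ ^ 2) := by positivity
  have h := (integrable_exp_neg_mul_sq hb).const_mul ((2 * π * σ ^ 2) ^ (-(1:ℝ)/2))
  apply h.congr
  filter_upwards with t
  unfold oneG
  congr 1
  congr 1
  field_simp

theorem oneG_integral (hσ : 0 < σ) : ∫ t, oneG σ t = 1 := by
  have hb : (0:ℝ) < 1 / (2 * σ ^ 2) := by positivity
  have h1 : ∫ t, oneG σ t
      = (2 * π * σ ^ 2) ^ (-(1:ℝ)/2) * ∫ t, Real.exp (-(1 / (2 * σ ^ 2)) * t ^ 2) := by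
    rw [← integral_const_mul]
    congr 1
    funext t
    unfold oneG
    congr 1
    congr 1
    field_simp
  rw [h1, integral_gaussian]
  have h2 : π / (1 / (2 * σ ^ 2)) = 2 * π * σ ^ 2 := by field_simp
  rw [h2, Real.sqrt_eq_rpow, ← Real.rpow_add (base_pos hσ)]
  norm_num

theorem oneG_shift_integrable (hσ : 0 < σ) (a : ℝ) : Integrable (fun t => oneG σ (t - a)) :=
  (oneG_integrable hσ).comp_sub_right a

theorem oneG_shift_integral (hσ : 0 < σ) (a : ℝ) : ∫ t, oneG σ (t - a) = 1 := by
  rw [integral_sub_right_eq_self (oneG σ) a]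
  exact oneG_integral hσ

theorem prodG_integrable (hσ : 0 < σ) {ι : Type*} [Fintype ι] (c : ι → ℝ) :
    Integrable (fun w : ι → ℝ => ∏ i, oneG σ (w i - c i)) :=
  Integrable.fintype_prod (fun i => oneG_shift_integrable hσ (c i))

theorem prodG_integral (hσ : 0 < σ) {ι : Type*} [Fintype ι] (c : ι → ℝ) :
    ∫ w : ι → ℝ, ∏ i, oneG σ (w i - c i) = 1 := by
  rw [volume_pi, MeasureTheory.integral_fintype_prod_eq_prod (f := fun i t => oneG σ (t - c i))]
  simp [oneG_shift_integral hσ]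

theorem gauss_eq_prod (hσ : 0 < σ) (t : Fin n → ℝ) :
    gaussIso σ t = ∏ i, oneG σ (t i) := by
  have h0 : gaussIso σ t = kern σ Finset.univ t 0 := by
    rw [← gauss_eq_kern_univ]
    congr 1
    simp
  rw [h0, kern_as_prod hσ]
  simp

theorem gauss_integrable (hσ : 0 < σ) : Integrable (gaussIso σ (n := n)) := by
  have := Integrable.fintype_prod (f := fun (_ : Fin n) t => oneG σ t) (fun _ => oneG_integrable hσ)
  exact this.congr (by filter_upwards with t; rw [gauss_eq_prod hσ])

theorem gauss_integral (hσ : 0 < σ) : ∫ t : Fin n → ℝ, gaussIso σ t = 1 := by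
  have h : ∫ t : Fin n → ℝ, gaussIso σ t = ∫ t : Fin n → ℝ, ∏ i, oneG σ (t i) := by
    congr 1; funext t; rw [gauss_eq_prod hσ]
  rw [h, volume_pi, MeasureTheory.integral_fintype_prod_eq_prod (f := fun _ t => oneG σ t)]
  simp [oneG_integral hσ]

theorem gauss_shift_integrable (hσ : 0 < σ) (a : Fin n → ℝ) :
    Integrable (fun t : Fin n → ℝ => gaussIso σ (t - a)) :=
  (gauss_integrable hσ).comp_sub_right a

theorem gauss_shift_integral (hσ : 0 < σ) (a : Fin n → ℝ) :
    ∫ t : Fin n → ℝ, gaussIso σ (t - a) = 1 := by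
  rw [integral_sub_right_eq_self (gaussIso σ) a]
  exact gauss_integral hσ

theorem gauss_nonneg (hσ : 0 < σ) (t : Fin n → ℝ) : 0 ≤ gaussIso σ t := by
  unfold gaussIso
  positivity

theorem gauss_continuous (σ : ℝ) : Continuous (gaussIso σ (n := n)) := by
  unfold gaussIso
  refine continuous_const.mul (Real.continuous_exp.comp ?_)
  exact ((continuous_finset_sum _ fun i _ => (continuous_apply i).pow 2).neg).div_const _

theorem kern_continuous (σ : ℝ) (S : Finset (Fin n)) (x : Fin n → ℝ) :
    Continuous (fun y => kern σ S x y) := by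
  unfold kern
  refine continuous_const.mul (Real.continuous_exp.comp ?_)
  exact ((continuous_finset_sum _ fun i _ =>
    (continuous_const.sub (continuous_apply i)).pow 2).neg).div_const _


/-! ### splitting integrals along a block of coordinates -/

def combineA (S : Finset (Fin n)) (a : {i : Fin n // i ∈ S} → ℝ) : Fin n → ℝ :=
  fun i => if h : i ∈ S then a ⟨i, h⟩ else 0

def combineB (S : Finset (Fin n)) (b : {i : Fin n // i ∉ S} → ℝ) : Fin n → ℝ :=
  fun i => if h : i ∈ S then 0 else b ⟨i, h⟩

def IA (S : Finset (Fin n)) (f : (Fin n → ℝ) → ℝ) : ℝ := ∫ a, f (combineA S a)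

def IB (S : Finset (Fin n)) (g : (Fin n → ℝ) → ℝ) : ℝ := ∫ b, g (combineB S b)

theorem split {S : Finset (Fin n)} {u v : (Fin n → ℝ) → ℝ}
    (hu : DepOn S u) (hv : DepOn Sᶜ v) :
    ∫ y, u y * v y = IA S u * IB S v := by
  classical
  have h0 := (MeasureTheory.volume_preserving_piEquivPiSubtypeProd
    (fun _ : Fin n => ℝ) (· ∈ S)).symm
  have h1 := h0.integral_comp (MeasurableEquiv.measurableEmbedding _) (fun y => u y * v y)
  rw [← h1]
  have h2 : ∀ z : ({i : Fin n // i ∈ S} → ℝ) × ({i : Fin n // i ∉ S} → ℝ),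
      u ((MeasurableEquiv.piEquivPiSubtypeProd (fun _ : Fin n => ℝ) (· ∈ S)).symm z)
        * v ((MeasurableEquiv.piEquivPiSubtypeProd (fun _ : Fin n => ℝ) (· ∈ S)).symm z)
      = u (combineA S z.1) * v (combineB S z.2) := by
    intro z
    have hs : ((MeasurableEquiv.piEquivPiSubtypeProd (fun _ : Fin n => ℝ) (· ∈ S)).symm z)
        = fun i => if h : i ∈ S then z.1 ⟨i, h⟩ else z.2 ⟨i, h⟩ := rfl
    congr 1
    · apply hu
      intro i hi
      rw [hs]
      simp only [combineA, dif_pos hi]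
    · apply hv
      intro i hi
      have hni : i ∉ S := Finset.mem_compl.mp hi
      rw [hs]
      simp only [combineB, dif_neg hni]
  simp only [h2]
  rw [MeasureTheory.Measure.volume_eq_prod]
  have h3 := MeasureTheory.integral_prod_mul (μ := volume) (ν := volume)
    (fun a => u (combineA S a)) (fun b => v (combineB S b))
  convert h3 using 2 <;> congr!

theorem disjoint_of_subset_compl {S T : Finset (Fin n)} (hT : T ⊆ Sᶜ) : Disjoint S T := by
  rw [Finset.disjoint_left]
  intro a haS haT
  exact (Finset.mem_compl.mp (hT haT)) haS

theorem split_kern (hσ : 0 < σ) {S T : Finset (Fin n)} (hT : T ⊆ Sᶜ)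
    {u v : (Fin n → ℝ) → ℝ} (hu : DepOn S u) (hv : DepOn Sᶜ v) (x : Fin n → ℝ) :
    ∫ y, (u y * v y) * kern σ (S ∪ T) x y
      = IA S (fun y => u y * kern σ S x y) * IB S (fun y => v y * kern σ T x y) := by
  have key : ∀ y, (u y * v y) * kern σ (S ∪ T) x y
      = (u y * kern σ S x y) * (v y * kern σ T x y) := by
    intro y
    rw [kern_union hσ (disjoint_of_subset_compl hT)]
    ring
  simp only [key]
  exact split (hu.mul (kern_depOn σ S x)) (hv.mul ((kern_depOn σ T x).mono hT))

/-! ### integrability helpers -/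

theorem integrable_mul_kern (hσ : 0 < σ) {q : (Fin n → ℝ) → ℝ} (hq : Integrable q)
    (S : Finset (Fin n)) (x : Fin n → ℝ) :
    Integrable (fun y => q y * kern σ S x y) := by
  have h := Integrable.bdd_mul (f := fun y => kern σ S x y) hq
    (kern_continuous σ S x).aestronglyMeasurable
    (c := (2 * π * σ ^ 2) ^ (-(S.card : ℝ) / 2)) (ae_of_all _ fun y => by
      rw [Real.norm_eq_abs, abs_of_pos (kern_pos hσ S x y)]
      exact kern_le hσ S x y)
  exact h.congr (by filter_upwards with y; ring_nf)

theorem integrable_mul_gauss (hσ : 0 < σ) {q : (Fin n → ℝ) → ℝ} (hq : Integrable q)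
    (z : Fin n → ℝ) : Integrable (fun y => q y * gaussIso σ (z - y)) := by
  have h := Integrable.bdd_mul (f := fun y => gaussIso σ (z - y)) hq
    ((gauss_continuous σ).comp (continuous_const.sub continuous_id)).aestronglyMeasurable
    (c := (2 * π * σ ^ 2) ^ (-(n : ℝ) / 2)) (ae_of_all _ fun y => by
      rw [gauss_eq_kern_univ σ z y, Real.norm_eq_abs, abs_of_pos (kern_pos hσ _ z y)]
      have := kern_le hσ Finset.univ z y
      rwa [Finset.card_univ, Fintype.card_fin] at this)
  exact h.congr (by filter_upwards with y; ring_nf)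

theorem J_pos (hσ : 0 < σ) {q : (Fin n → ℝ) → ℝ} (hq : ∀ y, 0 < q y) (hqi : Integrable q)
    (S : Finset (Fin n)) (x : Fin n → ℝ) :
    0 < ∫ y, q y * kern σ S x y := by
  rw [MeasureTheory.integral_pos_iff_support_of_nonneg_ae
    (Filter.Eventually.of_forall fun y => (mul_pos (hq y) (kern_pos hσ S x y)).le)
    (integrable_mul_kern hσ hqi S x)]
  have hsup : Function.support (fun y => q y * kern σ S x y) = Set.univ :=
    Set.eq_univ_iff_forall.mpr fun y => (mul_pos (hq y) (kern_pos hσ S x y)).ne'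
  rw [hsup]
  exact IsOpen.measure_pos _ isOpen_univ ⟨0, trivial⟩


/-! ### marginals of noised densities -/

theorem prodG_nonneg (hσ : 0 < σ) {ι : Type*} [Fintype ι] (c : ι → ℝ) (w : ι → ℝ) :
    0 ≤ ∏ i, oneG σ (w i - c i) :=
  Finset.prod_nonneg fun i _ => (oneG_pos hσ _).le

theorem lintegral_ofReal_const_mul_prodG (hσ : 0 < σ) {ι : Type*} [Fintype ι]
    {c : ℝ} (hc : 0 ≤ c) (cs : ι → ℝ) :
    ∫⁻ w : ι → ℝ, ENNReal.ofReal (c * ∏ i, oneG σ (w i - cs i)) = ENNReal.ofReal c := by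
  calc ∫⁻ w : ι → ℝ, ENNReal.ofReal (c * ∏ i, oneG σ (w i - cs i))
      = ∫⁻ w : ι → ℝ, ENNReal.ofReal c * ENNReal.ofReal (∏ i, oneG σ (w i - cs i)) := by
        apply lintegral_congr; intro w; rw [ENNReal.ofReal_mul hc]
    _ = ENNReal.ofReal c * ∫⁻ w : ι → ℝ, ENNReal.ofReal (∏ i, oneG σ (w i - cs i)) :=
        MeasureTheory.lintegral_const_mul' _ _ ENNReal.ofReal_ne_top
    _ = ENNReal.ofReal c := by
        rw [← MeasureTheory.ofReal_integral_eq_lintegral_ofReal (prodG_integrable hσ cs)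
          (ae_of_all _ fun w => prodG_nonneg hσ cs w), prodG_integral hσ]
        simp

theorem lintegral_ofReal_const_mul_gauss (hσ : 0 < σ) {c : ℝ} (hc : 0 ≤ c) (a : Fin n → ℝ) :
    ∫⁻ x : Fin n → ℝ, ENNReal.ofReal (c * gaussIso σ (x - a)) = ENNReal.ofReal c := by
  calc ∫⁻ x : Fin n → ℝ, ENNReal.ofReal (c * gaussIso σ (x - a))
      = ∫⁻ x : Fin n → ℝ, ENNReal.ofReal c * ENNReal.ofReal (gaussIso σ (x - a)) := by
        apply lintegral_congr; intro x; rw [ENNReal.ofReal_mul hc]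
    _ = ENNReal.ofReal c * ∫⁻ x : Fin n → ℝ, ENNReal.ofReal (gaussIso σ (x - a)) :=
        MeasureTheory.lintegral_const_mul' _ _ ENNReal.ofReal_ne_top
    _ = ENNReal.ofReal c := by
        rw [← MeasureTheory.ofReal_integral_eq_lintegral_ofReal (gauss_shift_integrable hσ a)
          (ae_of_all _ fun x => gauss_nonneg hσ _), gauss_shift_integral hσ]
        simp

theorem marginal_noise (hσ : 0 < σ) {q : (Fin n → ℝ) → ℝ} (hq0 : ∀ y, 0 ≤ q y)
    (hqi : Integrable q) (S : Finset (Fin n)) (x : Fin n → ℝ) :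
    marginal S (noise σ q) x = ∫ y, q y * kern σ S x y := by
  classical
  set z : ({i : Fin n // i ∉ S} → ℝ) → (Fin n → ℝ) :=
    fun w => fun i => if h : i ∈ S then x i else w ⟨i, h⟩ with hzdef
  have hzmeas : Measurable z := by
    apply measurable_pi_lambda
    intro i
    by_cases hi : i ∈ S
    · simp only [hzdef, dif_pos hi]; exact measurable_const
    · simp only [hzdef, dif_neg hi]; exact measurable_pi_apply _
  set Ψ : (({i : Fin n // i ∉ S} → ℝ) × (Fin n → ℝ)) → ℝ :=
    fun wy => q wy.2 * gaussIso σ (z wy.1 - wy.2) with hΨdef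
  have hΨm : AEStronglyMeasurable Ψ (MeasureTheory.volume.prod MeasureTheory.volume) := by
    apply AEStronglyMeasurable.mul
    · exact hqi.aestronglyMeasurable.comp_snd
    · exact ((gauss_continuous σ).measurable.comp
        ((hzmeas.comp measurable_fst).sub measurable_snd)).aestronglyMeasurable
  have hΨint : ∀ w, Integrable (fun y => Ψ (w, y)) := fun w => integrable_mul_gauss hσ hqi (z w)
  have hΨ0 : ∀ wy, 0 ≤ Ψ wy := fun wy => mul_nonneg (hq0 _) (gauss_nonneg hσ _)
  have hker : ∀ w y, gaussIso σ (z w - y)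
      = kern σ S x y * ∏ i : {i : Fin n // i ∉ S}, oneG σ (w i - y i.1) := by
    intro w y
    rw [gauss_eq_kern_univ σ (z w) y, ← Finset.union_compl S,
      kern_union hσ disjoint_compl_right]
    congr 1
    · exact kern_congr σ (fun i hi => by simp only [hzdef, dif_pos hi]) (fun _ _ => rfl)
    · rw [kern_as_prod hσ,
        Finset.prod_subtype Sᶜ (fun i => Finset.mem_compl) (fun i => oneG σ (z w i - y i))]
      apply Fintype.prod_congr
      intro i
      congr 1
      simp only [hzdef, dif_neg i.2]
  have h00 : marginal S (noise σ q) x = ∫ w : {i : Fin n // i ∉ S} → ℝ, noise σ q (z w) := rfl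
  rw [h00]
  have hnn : ∀ w, 0 ≤ noise σ q (z w) :=
    fun w => integral_nonneg fun y => hΨ0 (w, y)
  calc ∫ w, noise σ q (z w)
      = (∫⁻ w, ENNReal.ofReal (noise σ q (z w))).toReal := by
        rw [MeasureTheory.integral_eq_lintegral_of_nonneg_ae (ae_of_all _ hnn)
          hΨm.integral_prod_right']
    _ = (∫⁻ w, ∫⁻ y, ENNReal.ofReal (Ψ (w, y))).toReal := by
        congr 1
        apply lintegral_congr
        intro w
        rw [← MeasureTheory.ofReal_integral_eq_lintegral_ofReal (hΨint w)
          (ae_of_all _ fun y => hΨ0 (w, y))]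
        rfl
    _ = (∫⁻ y, ∫⁻ w, ENNReal.ofReal (Ψ (w, y))).toReal := by
        rw [MeasureTheory.lintegral_lintegral_swap hΨm.aemeasurable.ennreal_ofReal]
    _ = (∫⁻ y, ENNReal.ofReal (q y * kern σ S x y)).toReal := by
        congr 1
        apply lintegral_congr
        intro y
        have hc0 : 0 ≤ q y * kern σ S x y := mul_nonneg (hq0 y) (kern_nonneg hσ S x y)
        have h1 : ∀ w : {i : Fin n // i ∉ S} → ℝ, Ψ (w, y)
            = (q y * kern σ S x y) * ∏ i : {i : Fin n // i ∉ S}, oneG σ (w i - y i.1) := by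
          intro w
          simp only [hΨdef]
          rw [hker w y]
          ring
        simp only [h1]
        exact lintegral_ofReal_const_mul_prodG hσ hc0 (fun i : {i : Fin n // i ∉ S} => y i.1)
    _ = ∫ y, q y * kern σ S x y := by
        rw [← MeasureTheory.integral_eq_lintegral_of_nonneg_ae
          (ae_of_all _ fun y => mul_nonneg (hq0 y) (kern_nonneg hσ S x y))
          (hqi.aestronglyMeasurable.mul (kern_continuous σ S x).aestronglyMeasurable)]

theorem integral_noise (hσ : 0 < σ) {q : (Fin n → ℝ) → ℝ} (hq0 : ∀ y, 0 ≤ q y)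
    (hqi : Integrable q) :
    ∫ x, noise σ q x = ∫ y, q y := by
  set Ψ : ((Fin n → ℝ) × (Fin n → ℝ)) → ℝ :=
    fun xy => q xy.2 * gaussIso σ (xy.1 - xy.2) with hΨdef
  have hΨm : AEStronglyMeasurable Ψ (MeasureTheory.volume.prod MeasureTheory.volume) := by
    apply AEStronglyMeasurable.mul
    · exact hqi.aestronglyMeasurable.comp_snd
    · exact ((gauss_continuous σ).measurable.comp
        (measurable_fst.sub measurable_snd)).aestronglyMeasurable
  have hΨint : ∀ x, Integrable (fun y => Ψ (x, y)) := fun x => integrable_mul_gauss hσ hqi x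
  have hΨ0 : ∀ xy, 0 ≤ Ψ xy := fun xy => mul_nonneg (hq0 _) (gauss_nonneg hσ _)
  have hnn : ∀ x, 0 ≤ noise σ q x := fun x => integral_nonneg fun y => hΨ0 (x, y)
  calc ∫ x, noise σ q x
      = (∫⁻ x, ENNReal.ofReal (noise σ q x)).toReal := by
        rw [MeasureTheory.integral_eq_lintegral_of_nonneg_ae (ae_of_all _ hnn)
          hΨm.integral_prod_right']
    _ = (∫⁻ x, ∫⁻ y, ENNReal.ofReal (Ψ (x, y))).toReal := by
        congr 1
        apply lintegral_congr
        intro x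
        rw [← MeasureTheory.ofReal_integral_eq_lintegral_ofReal (hΨint x)
          (ae_of_all _ fun y => hΨ0 (x, y))]
        rfl
    _ = (∫⁻ y, ∫⁻ x, ENNReal.ofReal (Ψ (x, y))).toReal := by
        rw [MeasureTheory.lintegral_lintegral_swap hΨm.aemeasurable.ennreal_ofReal]
    _ = (∫⁻ y, ENNReal.ofReal (q y)).toReal := by
        congr 1
        apply lintegral_congr
        intro y
        have h1 : ∀ x : Fin n → ℝ, Ψ (x, y) = q y * gaussIso σ (x - y) := fun x => rfl
        simp only [h1]
        have := lintegral_ofReal_const_mul_gauss hσ (hq0 y) y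
        simpa using this
    _ = ∫ y, q y := by
        rw [← MeasureTheory.integral_eq_lintegral_of_nonneg_ae
          (ae_of_all _ hq0) hqi.aestronglyMeasurable]


/-! ### noise as a kernel integral, and the multi-block splitting identity -/

theorem noise_eq_J (σ : ℝ) (q : (Fin n → ℝ) → ℝ) (x : Fin n → ℝ) :
    noise σ q x = ∫ y, q y * kern σ Finset.univ x y := by
  unfold noise
  exact integral_congr_ae (ae_of_all _ fun y => by simp only; rw [gauss_eq_kern_univ])

theorem J_biUnion {k : ℕ} (hσ : 0 < σ) (Mb : Finset (Fin n)) (M : Fin k → Finset (Fin n))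
    (hdb : ∀ i, Disjoint Mb (M i)) (hdM : ∀ i j, i ≠ j → Disjoint (M i) (M j))
    {q : (Fin n → ℝ) → ℝ}
    (hfac : ∀ i : Fin k, ∃ u v : (Fin n → ℝ) → ℝ, DepOn (M i) u ∧ DepOn (M i)ᶜ v ∧
      ∀ y, q y = u y * v y)
    (hq1 : ∫ y, q y = 1) (x : Fin n → ℝ) (s : Finset (Fin k)) :
    ∫ y, q y * kern σ (Mb ∪ s.biUnion M) x y
      = (∫ y, q y * kern σ Mb x y) * ∏ i ∈ s, ∫ y, q y * kern σ (M i) x y := by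
  classical
  induction s using Finset.induction_on with
  | empty => simp
  | @insert j s hjs ih =>
    obtain ⟨u, v, du, dv, hq⟩ := hfac j
    have hAsub : Mb ∪ s.biUnion M ⊆ (M j)ᶜ := by
      intro a ha
      rw [Finset.mem_compl]
      rcases Finset.mem_union.mp ha with h | h
      · exact fun haj => (Finset.disjoint_left.mp (hdb j)) h haj
      · obtain ⟨l, hl, hal⟩ := Finset.mem_biUnion.mp h
        intro haj
        have hlj : l ≠ j := by rintro rfl; exact hjs hl
        exact (Finset.disjoint_left.mp (hdM l j hlj)) hal haj
    have hU : Mb ∪ (insert j s).biUnion M = M j ∪ (Mb ∪ s.biUnion M) := by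
      rw [Finset.biUnion_insert]
      ext a
      simp only [Finset.mem_union]
      tauto
    have e0 : (1:ℝ) = IA (M j) u * IB (M j) v := by
      rw [← hq1]
      calc ∫ y, q y = ∫ y, u y * v y := integral_congr_ae (ae_of_all _ fun y => hq y)
        _ = IA (M j) u * IB (M j) v := split du dv
    have emain : ∫ y, q y * kern σ (M j ∪ (Mb ∪ s.biUnion M)) x y
        = IA (M j) (fun y => u y * kern σ (M j) x y)
          * IB (M j) (fun y => v y * kern σ (Mb ∪ s.biUnion M) x y) := by
      calc ∫ y, q y * kern σ (M j ∪ (Mb ∪ s.biUnion M)) x y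
          = ∫ y, (u y * v y) * kern σ (M j ∪ (Mb ∪ s.biUnion M)) x y :=
            integral_congr_ae (ae_of_all _ fun y => by simp only; rw [hq y])
        _ = _ := split_kern hσ hAsub du dv x
    have e1 : ∫ y, q y * kern σ (M j) x y
        = IA (M j) (fun y => u y * kern σ (M j) x y) * IB (M j) v := by
      calc ∫ y, q y * kern σ (M j) x y
          = ∫ y, (u y * kern σ (M j) x y) * v y :=
            integral_congr_ae (ae_of_all _ fun y => by simp only; rw [hq y]; ring)
        _ = _ := split (du.mul (kern_depOn σ (M j) x)) dv
    have e2 : ∫ y, q y * kern σ (Mb ∪ s.biUnion M) x y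
        = IA (M j) u * IB (M j) (fun y => v y * kern σ (Mb ∪ s.biUnion M) x y) := by
      calc ∫ y, q y * kern σ (Mb ∪ s.biUnion M) x y
          = ∫ y, u y * (v y * kern σ (Mb ∪ s.biUnion M) x y) :=
            integral_congr_ae (ae_of_all _ fun y => by simp only; rw [hq y]; ring)
        _ = _ := split du (dv.mul ((kern_depOn σ (Mb ∪ s.biUnion M) x).mono hAsub))
    have goal2 : ∫ y, q y * kern σ (M j ∪ (Mb ∪ s.biUnion M)) x y
        = (∫ y, q y * kern σ (M j) x y) * ∫ y, q y * kern σ (Mb ∪ s.biUnion M) x y := by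
      rw [emain, e1, e2]
      linear_combination (IA (M j) (fun y => u y * kern σ (M j) x y)
        * IB (M j) (fun y => v y * kern σ (Mb ∪ s.biUnion M) x y)) * e0
    rw [hU, goal2, ih, Finset.prod_insert hjs]
    ring

end FCAux

open FCAux

/-- If `(pb, p 1, …, p k)` are Factorized Conditionals then so are their Gaussian-noised
versions (for every `σ > 0`, with the same partition), and the composition operator
commutes with Gaussian noising. -/
theorem statement_1 {n k : ℕ} (Mb : Finset (Fin n)) (M : Fin k → Finset (Fin n))
    (pb : (Fin n → ℝ) → ℝ) (p : Fin k → (Fin n → ℝ) → ℝ)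
    (hpb : IsDensity pb) (hp : ∀ i, IsDensity (p i))
    (hpbpos : ∀ x, 0 < pb x)
    (hFC : FactorizedConditionals Mb M pb p) :
    ∀ σ : ℝ, 0 < σ →
      FactorizedConditionals Mb M (noise σ pb) (fun i => noise σ (p i)) ∧
      (∀ x, comp (noise σ pb) (fun i => noise σ (p i)) x = noise σ (comp pb p) x) := by
  classical
  obtain ⟨hpb0, hpbi, hpbI⟩ := hpb
  obtain ⟨⟨hdb, hdM, hcover⟩, hFC2, hFC3⟩ := hFC
  intro σ hσ
  -- subset facts
  have hMbc : ∀ i, Mb ⊆ (M i)ᶜ := fun i a ha =>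
    Finset.mem_compl.mpr fun haj => (Finset.disjoint_left.mp (hdb i)) ha haj
  have hMcb : ∀ j, M j ⊆ Mbᶜ := fun j a ha =>
    Finset.mem_compl.mpr fun haj => (Finset.disjoint_left.mp (hdb j)) haj ha
  have hMMc : ∀ j i : Fin k, j ≠ i → M j ⊆ (M i)ᶜ := fun j i hji a ha =>
    Finset.mem_compl.mpr fun haj => (Finset.disjoint_left.mp (hdM j i hji)) ha haj
  -- dependence facts
  have dFb : DepOn Mb (marginal Mb pb) := marginal_depOn Mb pb
  have dF : ∀ j, DepOn (M j) (marginal (M j) pb) := fun j => marginal_depOn _ _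
  have dG : ∀ i, DepOn (M i) (marginal (M i) (p i)) := fun i => marginal_depOn _ _
  set R : Fin k → (Fin n → ℝ) → ℝ :=
    fun i x => marginal Mb pb x * ∏ j ∈ Finset.univ.erase i, marginal (M j) pb x with hRdef
  have dR : ∀ i, DepOn (M i)ᶜ (R i) := by
    intro i
    have h1 : DepOn (M i)ᶜ (fun x =>
        marginal Mb pb x * ∏ j ∈ Finset.univ.erase i, marginal (M j) pb x) :=
      (dFb.mono (hMbc i)).mul (DepOn.prod _ _ fun j hj =>
        (dF j).mono (hMMc j i (Finset.mem_erase.mp hj).1))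
    exact h1
  -- pointwise factorisations
  have hpbF : ∀ i x, pb x = marginal (M i) pb x * R i x := by
    intro i x
    rw [hFC3 x, hRdef]
    simp only
    rw [← Finset.mul_prod_erase Finset.univ (fun j => marginal (M j) pb x) (Finset.mem_univ i)]
    ring
  set c : Fin k → ℝ := fun i =>
    ∫ b : {j : Fin n // j ∉ (M i)ᶜ} → ℝ,
      marginal (M i) pb (fun j => if h : j ∈ (M i)ᶜ then 0 else b ⟨j, h⟩) with hcdef
  have hH : ∀ i x, marginal (M i)ᶜ pb x = c i * R i x := by
    intro i x
    have h1 : marginal (M i)ᶜ pb x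
        = marginal (M i)ᶜ (fun z => marginal (M i) pb z * R i z) x := by
      congr 1
      funext z
      exact hpbF i z
    have hu : DepOn ((M i)ᶜ)ᶜ (marginal (M i) pb) := by
      rw [compl_compl]; exact dF i
    rw [h1, marginal_mul hu (dR i) x, hcdef]
  -- positivity
  have hFpos : ∀ j x, 0 < marginal (M j) pb x := by
    intro j x
    rcases (marginal_nonneg hpb0 x (S := M j)).lt_or_eq with h | h
    · exact h
    · exfalso
      have h0 : pb x = 0 := by
        rw [hFC3 x, Finset.prod_eq_zero (Finset.mem_univ j) h.symm, mul_zero]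
      exact absurd h0 (hpbpos x).ne'
  have hFbpos : ∀ x, 0 < marginal Mb pb x := by
    intro x
    rcases (marginal_nonneg hpb0 x (S := Mb)).lt_or_eq with h | h
    · exact h
    · exfalso
      have h0 : pb x = 0 := by rw [hFC3 x, ← h, zero_mul]
      exact absurd h0 (hpbpos x).ne'
  have hRpos : ∀ i x, 0 < R i x := by
    intro i x
    rw [hRdef]
    simp only
    exact mul_pos (hFbpos x) (Finset.prod_pos fun j _ => hFpos j x)
  have hpF : ∀ i x, p i x = (c i * marginal (M i) (p i) x) * R i x := by
    intro i x
    rw [hFC2 i x, hH i x]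
    ring
  have hpiI : ∀ i, ∫ y, p i y = 1 := fun i => (hp i).2.2
  have hcpos : ∀ i, 0 < c i := by
    intro i
    rcases (le_of_eq rfl : c i ≤ c i) with _
    have hnn : 0 ≤ c i := by
      rw [hcdef]
      exact integral_nonneg fun b => marginal_nonneg hpb0 _
    rcases hnn.lt_or_eq with h | h
    · exact h
    · exfalso
      have hzero : ∀ x, p i x = 0 := fun x => by rw [hpF i x, ← h]; ring
      have h0 : ∫ y, p i y = 0 := by
        calc ∫ y, p i y = ∫ _y : Fin n → ℝ, (0:ℝ) :=
              integral_congr_ae (ae_of_all _ fun y => hzero y)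
          _ = 0 := integral_zero _ _
      rw [hpiI i] at h0
      norm_num at h0
  -- the factorization data for pb
  have hfacpb : ∀ i : Fin k, ∃ u v, DepOn (M i) u ∧ DepOn (M i)ᶜ v ∧ ∀ y, pb y = u y * v y :=
    fun i => ⟨marginal (M i) pb, R i, dF i, dR i, hpbF i⟩
  -- kernel-form of condition (2) for the noised densities
  have hker2 : ∀ i x, ∫ y, p i y * kern σ Finset.univ x y
      = (∫ y, p i y * kern σ (M i) x y) * ∫ y, pb y * kern σ (M i)ᶜ x y := by
    intro i x
    have du : DepOn (M i) (fun y => c i * marginal (M i) (p i) y) :=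
      DepOn.const_mul _ (dG i)
    have emain : ∫ y, p i y * kern σ Finset.univ x y
        = IA (M i) (fun y => (c i * marginal (M i) (p i) y) * kern σ (M i) x y)
          * IB (M i) (fun y => R i y * kern σ (M i)ᶜ x y) := by
      calc ∫ y, p i y * kern σ Finset.univ x y
          = ∫ y, ((c i * marginal (M i) (p i) y) * R i y) * kern σ ((M i) ∪ (M i)ᶜ) x y := by
            refine integral_congr_ae (ae_of_all _ fun y => ?_)
            simp only
            rw [← hpF i y, Finset.union_compl]
        _ = _ := split_kern hσ (subset_refl (M i)ᶜ) du (dR i) x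
    have e1 : ∫ y, p i y * kern σ (M i) x y
        = IA (M i) (fun y => (c i * marginal (M i) (p i) y) * kern σ (M i) x y)
          * IB (M i) (R i) := by
      calc ∫ y, p i y * kern σ (M i) x y
          = ∫ y, ((c i * marginal (M i) (p i) y) * kern σ (M i) x y) * R i y := by
            refine integral_congr_ae (ae_of_all _ fun y => ?_)
            simp only
            rw [hpF i y]
            ring
        _ = _ := split (du.mul (kern_depOn σ (M i) x)) (dR i)
    have e2 : ∫ y, pb y * kern σ (M i)ᶜ x y
        = IA (M i) (marginal (M i) pb)
          * IB (M i) (fun y => R i y * kern σ (M i)ᶜ x y) := by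
      calc ∫ y, pb y * kern σ (M i)ᶜ x y
          = ∫ y, marginal (M i) pb y * (R i y * kern σ (M i)ᶜ x y) := by
            refine integral_congr_ae (ae_of_all _ fun y => ?_)
            simp only
            rw [hpbF i y]
            ring
        _ = _ := split (dF i) ((dR i).mul ((kern_depOn σ (M i)ᶜ x).mono (subset_refl _)))
    have e0 : (1:ℝ) = IA (M i) (marginal (M i) pb) * IB (M i) (R i) := by
      rw [← hpbI]
      calc ∫ y, pb y
          = ∫ y, marginal (M i) pb y * R i y :=
            integral_congr_ae (ae_of_all _ fun y => by simp only; rw [hpbF i y])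
        _ = _ := split (dF i) (dR i)
    rw [emain, e1, e2]
    linear_combination (IA (M i) (fun y => (c i * marginal (M i) (p i) y) * kern σ (M i) x y)
      * IB (M i) (fun y => R i y * kern σ (M i)ᶜ x y)) * e0
  have h2' : ∀ i x, noise σ (p i) x
      = marginal (M i) (noise σ (p i)) x * marginal (M i)ᶜ (noise σ pb) x := by
    intro i x
    rw [noise_eq_J, marginal_noise hσ (hp i).1 (hp i).2.1 (M i) x,
      marginal_noise hσ hpb0 hpbi (M i)ᶜ x]
    exact hker2 i x
  have h3' : ∀ x, noise σ pb x
      = marginal Mb (noise σ pb) x * ∏ i, marginal (M i) (noise σ pb) x := by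
    intro x
    rw [noise_eq_J, marginal_noise hσ hpb0 hpbi Mb x]
    have hJ := J_biUnion hσ Mb M hdb hdM hfacpb hpbI x Finset.univ
    rw [hcover] at hJ
    rw [hJ]
    congr 1
    exact Finset.prod_congr rfl fun i _ => (marginal_noise hσ hpb0 hpbi (M i) x).symm
  refine ⟨⟨⟨hdb, hdM, hcover⟩, fun i x => h2' i x, h3'⟩, ?_⟩
  -- ### Part B : the composition operator commutes with noising
  -- pointwise formula for compRaw pb p
  have hr : ∀ x, compRaw pb p x
      = marginal Mb pb x * ∏ i, (c i * marginal (M i) (p i) x) := by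
    intro x
    unfold compRaw
    have hdiv : ∀ i : Fin k, p i x / pb x
        = (c i * marginal (M i) (p i) x) / marginal (M i) pb x := by
      intro i
      rw [hpF i x, hpbF i x, mul_div_mul_right _ _ (hRpos i x).ne']
    have hPF : (∏ i, marginal (M i) pb x) ≠ 0 :=
      (Finset.prod_pos fun j _ => hFpos j x).ne'
    calc pb x * ∏ i, p i x / pb x
        = (marginal Mb pb x * ∏ i, marginal (M i) pb x)
          * ∏ i, ((c i * marginal (M i) (p i) x) / marginal (M i) pb x) := by
          congr 1
          · exact hFC3 x
          · exact Finset.prod_congr rfl fun i _ => hdiv i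
      _ = marginal Mb pb x * ∏ i, (c i * marginal (M i) (p i) x) := by
          rw [Finset.prod_div_distrib]
          field_simp
  -- the normalisation constant of compRaw pb p is 1
  have hqs : ∀ s : Finset (Fin k),
      ∫ y, (marginal Mb pb y * (∏ i ∈ s, (c i * marginal (M i) (p i) y))
        * ∏ i ∈ sᶜ, marginal (M i) pb y) = 1 := by
    intro s
    induction s using Finset.induction_on with
    | empty =>
      have he : ∀ y, marginal Mb pb y
          * (∏ i ∈ (∅ : Finset (Fin k)), (c i * marginal (M i) (p i) y))
          * ∏ i ∈ (∅ : Finset (Fin k))ᶜ, marginal (M i) pb y = pb y := by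
        intro y
        rw [Finset.prod_empty, Finset.compl_empty, mul_one, ← hFC3 y]
      rw [integral_congr_ae (ae_of_all _ fun y => he y), hpbI]
    | @insert j s hjs ih =>
      have ejs : j ∈ sᶜ := Finset.mem_compl.mpr hjs
      have dV : DepOn (M j)ᶜ (fun y => marginal Mb pb y
          * (∏ i ∈ s, (c i * marginal (M i) (p i) y))
          * ∏ i ∈ sᶜ.erase j, marginal (M i) pb y) := by
        refine DepOn.mul (DepOn.mul (dFb.mono (hMbc j)) (DepOn.prod _ _ fun i hi => ?_))
          (DepOn.prod _ _ fun i hi => ?_)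
        · refine DepOn.const_mul _ ((dG i).mono (hMMc i j ?_))
          rintro rfl
          exact hjs hi
        · exact (dF i).mono (hMMc i j (Finset.mem_erase.mp hi).1)
      have eq_s : ∀ y, marginal Mb pb y * (∏ i ∈ s, (c i * marginal (M i) (p i) y))
          * ∏ i ∈ sᶜ, marginal (M i) pb y
          = marginal (M j) pb y * (marginal Mb pb y
            * (∏ i ∈ s, (c i * marginal (M i) (p i) y))
            * ∏ i ∈ sᶜ.erase j, marginal (M i) pb y) := by
        intro y
        rw [← Finset.mul_prod_erase sᶜ (fun i => marginal (M i) pb y) ejs]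
        ring
      have eq_ins : ∀ y, marginal Mb pb y
          * (∏ i ∈ insert j s, (c i * marginal (M i) (p i) y))
          * ∏ i ∈ (insert j s)ᶜ, marginal (M i) pb y
          = (c j * marginal (M j) (p j) y) * (marginal Mb pb y
            * (∏ i ∈ s, (c i * marginal (M i) (p i) y))
            * ∏ i ∈ sᶜ.erase j, marginal (M i) pb y) := by
        intro y
        rw [Finset.prod_insert hjs, Finset.compl_insert]
        ring
      have A2 : (1:ℝ) = IA (M j) (marginal (M j) pb)
          * IB (M j) (fun y => marginal Mb pb y
            * (∏ i ∈ s, (c i * marginal (M i) (p i) y))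
            * ∏ i ∈ sᶜ.erase j, marginal (M i) pb y) := by
        rw [← ih]
        calc ∫ y, (marginal Mb pb y * (∏ i ∈ s, (c i * marginal (M i) (p i) y))
              * ∏ i ∈ sᶜ, marginal (M i) pb y)
            = ∫ y, marginal (M j) pb y * (marginal Mb pb y
              * (∏ i ∈ s, (c i * marginal (M i) (p i) y))
              * ∏ i ∈ sᶜ.erase j, marginal (M i) pb y) :=
              integral_congr_ae (ae_of_all _ fun y => by simp only; rw [eq_s y])
          _ = _ := split (dF j) dV
      have A3 : (1:ℝ) = IA (M j) (marginal (M j) pb) * IB (M j) (R j) := by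
        rw [← hpbI]
        calc ∫ y, pb y
            = ∫ y, marginal (M j) pb y * R j y :=
              integral_congr_ae (ae_of_all _ fun y => by simp only; rw [hpbF j y])
          _ = _ := split (dF j) (dR j)
      have A4 : (1:ℝ) = IA (M j) (fun y => c j * marginal (M j) (p j) y) * IB (M j) (R j) := by
        rw [← hpiI j]
        calc ∫ y, p j y
            = ∫ y, (c j * marginal (M j) (p j) y) * R j y :=
              integral_congr_ae (ae_of_all _ fun y => by simp only; rw [hpF j y])
          _ = _ := split (DepOn.const_mul _ (dG j)) (dR j)
      have hIBne : IB (M j) (R j) ≠ 0 := by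
        intro h0
        rw [h0, mul_zero] at A3
        norm_num at A3
      have hIAeq : IA (M j) (marginal (M j) pb)
          = IA (M j) (fun y => c j * marginal (M j) (p j) y) :=
        mul_right_cancel₀ hIBne (A3.symm.trans A4)
      calc ∫ y, (marginal Mb pb y * (∏ i ∈ insert j s, (c i * marginal (M i) (p i) y))
            * ∏ i ∈ (insert j s)ᶜ, marginal (M i) pb y)
          = ∫ y, (c j * marginal (M j) (p j) y) * (marginal Mb pb y
            * (∏ i ∈ s, (c i * marginal (M i) (p i) y))
            * ∏ i ∈ sᶜ.erase j, marginal (M i) pb y) :=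
            integral_congr_ae (ae_of_all _ fun y => by simp only; rw [eq_ins y])
        _ = IA (M j) (fun y => c j * marginal (M j) (p j) y)
            * IB (M j) (fun y => marginal Mb pb y
              * (∏ i ∈ s, (c i * marginal (M i) (p i) y))
              * ∏ i ∈ sᶜ.erase j, marginal (M i) pb y) :=
            split (DepOn.const_mul _ (dG j)) dV
        _ = 1 := by rw [← hIAeq, ← A2]
  have hZ : ∫ y, compRaw pb p y = 1 := by
    calc ∫ y, compRaw pb p y
        = ∫ y, (marginal Mb pb y
            * (∏ i ∈ (Finset.univ : Finset (Fin k)), (c i * marginal (M i) (p i) y))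
            * ∏ i ∈ (Finset.univ : Finset (Fin k))ᶜ, marginal (M i) pb y) := by
          refine integral_congr_ae (ae_of_all _ fun y => ?_)
          simp only [Finset.compl_univ, Finset.prod_empty, mul_one]
          exact hr y
      _ = 1 := hqs Finset.univ
  have hrint : Integrable (compRaw pb p) := by
    by_contra hcon
    rw [MeasureTheory.integral_undef hcon] at hZ
    norm_num at hZ
  have hr0 : ∀ y, 0 ≤ compRaw pb p y := by
    intro y
    rw [hr y]
    exact mul_nonneg (marginal_nonneg hpb0 y) (Finset.prod_nonneg fun i _ =>
      mul_nonneg (hcpos i).le (marginal_nonneg (hp i).1 y))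
  have hcompeq : ∀ y, comp pb p y = compRaw pb p y := by
    intro y
    unfold comp
    rw [hZ, div_one]
  -- factorization data for compRaw pb p
  have hfacr : ∀ i : Fin k, ∃ u v, DepOn (M i) u ∧ DepOn (M i)ᶜ v ∧
      ∀ y, compRaw pb p y = u y * v y := by
    intro i
    refine ⟨fun y => c i * marginal (M i) (p i) y,
      fun y => marginal Mb pb y * ∏ j ∈ Finset.univ.erase i, (c j * marginal (M j) (p j) y),
      DepOn.const_mul _ (dG i), ?_, ?_⟩
    · exact (dFb.mono (hMbc i)).mul (DepOn.prod _ _ fun j hj =>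
        DepOn.const_mul _ ((dG j).mono (hMMc j i (Finset.mem_erase.mp hj).1)))
    · intro y
      rw [hr y, ← Finset.mul_prod_erase Finset.univ
        (fun j => c j * marginal (M j) (p j) y) (Finset.mem_univ i)]
      ring
  have hJr := J_biUnion hσ Mb M hdb hdM hfacr hZ
  -- matching the marginal blocks of compRaw with those of pb and p i
  have hJrMb : ∀ x, ∫ y, compRaw pb p y * kern σ Mb x y = ∫ y, pb y * kern σ Mb x y := by
    intro x
    have dcG : DepOn Mbᶜ (fun y => ∏ j, (c j * marginal (M j) (p j) y)) :=
      DepOn.prod _ _ fun j _ => DepOn.const_mul _ ((dG j).mono (hMcb j))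
    have dFprod : DepOn Mbᶜ (fun y => ∏ j, marginal (M j) pb y) :=
      DepOn.prod _ _ fun j _ => (dF j).mono (hMcb j)
    have f1 : ∫ y, compRaw pb p y * kern σ Mb x y
        = IA Mb (fun y => marginal Mb pb y * kern σ Mb x y)
          * IB Mb (fun y => ∏ j, (c j * marginal (M j) (p j) y)) := by
      calc ∫ y, compRaw pb p y * kern σ Mb x y
          = ∫ y, (marginal Mb pb y * kern σ Mb x y)
            * ∏ j, (c j * marginal (M j) (p j) y) := by
            refine integral_congr_ae (ae_of_all _ fun y => ?_)
            simp only
            rw [hr y]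
            ring
        _ = _ := split (dFb.mul (kern_depOn σ Mb x)) dcG
    have f2 : ∫ y, pb y * kern σ Mb x y
        = IA Mb (fun y => marginal Mb pb y * kern σ Mb x y)
          * IB Mb (fun y => ∏ j, marginal (M j) pb y) := by
      calc ∫ y, pb y * kern σ Mb x y
          = ∫ y, (marginal Mb pb y * kern σ Mb x y) * ∏ j, marginal (M j) pb y := by
            refine integral_congr_ae (ae_of_all _ fun y => ?_)
            simp only
            rw [hFC3 y]
            ring
        _ = _ := split (dFb.mul (kern_depOn σ Mb x)) dFprod
    have f3 : (1:ℝ) = IA Mb (marginal Mb pb)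
        * IB Mb (fun y => ∏ j, (c j * marginal (M j) (p j) y)) := by
      rw [← hZ]
      calc ∫ y, compRaw pb p y
          = ∫ y, marginal Mb pb y * ∏ j, (c j * marginal (M j) (p j) y) :=
            integral_congr_ae (ae_of_all _ fun y => by simp only; rw [hr y])
        _ = _ := split dFb dcG
    have f4 : (1:ℝ) = IA Mb (marginal Mb pb)
        * IB Mb (fun y => ∏ j, marginal (M j) pb y) := by
      rw [← hpbI]
      calc ∫ y, pb y
          = ∫ y, marginal Mb pb y * ∏ j, marginal (M j) pb y :=
            integral_congr_ae (ae_of_all _ fun y => by simp only; rw [hFC3 y])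
        _ = _ := split dFb dFprod
    have hIAne : IA Mb (marginal Mb pb) ≠ 0 := by
      intro h0
      rw [h0, zero_mul] at f4
      norm_num at f4
    have hIBeq : IB Mb (fun y => ∏ j, (c j * marginal (M j) (p j) y))
        = IB Mb (fun y => ∏ j, marginal (M j) pb y) :=
      mul_left_cancel₀ hIAne (f3.symm.trans f4)
    rw [f1, f2, hIBeq]
  have hJrMi : ∀ i x, ∫ y, compRaw pb p y * kern σ (M i) x y
      = ∫ y, p i y * kern σ (M i) x y := by
    intro i x
    have dVi : DepOn (M i)ᶜ (fun y => marginal Mb pb y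
        * ∏ j ∈ Finset.univ.erase i, (c j * marginal (M j) (p j) y)) :=
      (dFb.mono (hMbc i)).mul (DepOn.prod _ _ fun j hj =>
        DepOn.const_mul _ ((dG j).mono (hMMc j i (Finset.mem_erase.mp hj).1)))
    have du : DepOn (M i) (fun y => c i * marginal (M i) (p i) y) :=
      DepOn.const_mul _ (dG i)
    have g1 : ∫ y, compRaw pb p y * kern σ (M i) x y
        = IA (M i) (fun y => (c i * marginal (M i) (p i) y) * kern σ (M i) x y)
          * IB (M i) (fun y => marginal Mb pb y
            * ∏ j ∈ Finset.univ.erase i, (c j * marginal (M j) (p j) y)) := by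
      calc ∫ y, compRaw pb p y * kern σ (M i) x y
          = ∫ y, ((c i * marginal (M i) (p i) y) * kern σ (M i) x y)
            * (marginal Mb pb y
              * ∏ j ∈ Finset.univ.erase i, (c j * marginal (M j) (p j) y)) := by
            refine integral_congr_ae (ae_of_all _ fun y => ?_)
            simp only
            rw [hr y, ← Finset.mul_prod_erase Finset.univ
              (fun j => c j * marginal (M j) (p j) y) (Finset.mem_univ i)]
            ring
        _ = _ := split (du.mul (kern_depOn σ (M i) x)) dVi
    have g2 : ∫ y, p i y * kern σ (M i) x y
        = IA (M i) (fun y => (c i * marginal (M i) (p i) y) * kern σ (M i) x y)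
          * IB (M i) (R i) := by
      calc ∫ y, p i y * kern σ (M i) x y
          = ∫ y, ((c i * marginal (M i) (p i) y) * kern σ (M i) x y) * R i y := by
            refine integral_congr_ae (ae_of_all _ fun y => ?_)
            simp only
            rw [hpF i y]
            ring
        _ = _ := split (du.mul (kern_depOn σ (M i) x)) (dR i)
    have g3 : (1:ℝ) = IA (M i) (fun y => c i * marginal (M i) (p i) y)
        * IB (M i) (fun y => marginal Mb pb y
          * ∏ j ∈ Finset.univ.erase i, (c j * marginal (M j) (p j) y)) := by
      rw [← hZ]
      calc ∫ y, compRaw pb p y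
          = ∫ y, (c i * marginal (M i) (p i) y) * (marginal Mb pb y
            * ∏ j ∈ Finset.univ.erase i, (c j * marginal (M j) (p j) y)) := by
            refine integral_congr_ae (ae_of_all _ fun y => ?_)
            simp only
            rw [hr y, ← Finset.mul_prod_erase Finset.univ
              (fun j => c j * marginal (M j) (p j) y) (Finset.mem_univ i)]
            ring
        _ = _ := split du dVi
    have g4 : (1:ℝ) = IA (M i) (fun y => c i * marginal (M i) (p i) y)
        * IB (M i) (R i) := by
      rw [← hpiI i]
      calc ∫ y, p i y
          = ∫ y, (c i * marginal (M i) (p i) y) * R i y :=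
            integral_congr_ae (ae_of_all _ fun y => by simp only; rw [hpF i y])
        _ = _ := split du (dR i)
    have hIAne : IA (M i) (fun y => c i * marginal (M i) (p i) y) ≠ 0 := by
      intro h0
      rw [h0, zero_mul] at g4
      norm_num at g4
    have hIBeq : IB (M i) (fun y => marginal Mb pb y
        * ∏ j ∈ Finset.univ.erase i, (c j * marginal (M j) (p j) y)) = IB (M i) (R i) :=
      mul_left_cancel₀ hIAne (g3.symm.trans g4)
    rw [g1, g2, hIBeq]
  -- the complement of a block is the union of the other blocks
  have hcompl : ∀ i, (M i)ᶜ = Mb ∪ (Finset.univ.erase i).biUnion M := by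
    intro i
    ext a
    simp only [Finset.mem_compl, Finset.mem_union, Finset.mem_biUnion, Finset.mem_erase,
      Finset.mem_univ, true_and, and_true]
    constructor
    · intro ha
      have hmem : a ∈ Mb ∪ Finset.univ.biUnion M := by rw [hcover]; exact Finset.mem_univ a
      rcases Finset.mem_union.mp hmem with h | h
      · exact Or.inl h
      · obtain ⟨l, _, hal⟩ := Finset.mem_biUnion.mp h
        refine Or.inr ⟨l, ⟨?_, hal⟩⟩
        rintro rfl
        exact ha hal
    · rintro (h | ⟨l, hli, hal⟩)
      · exact fun hai => (Finset.disjoint_left.mp (hdb i)) h hai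
      · exact fun hai => (Finset.disjoint_left.mp (hdM l i hli)) hal hai
  -- block formulas for the noised densities
  have hnb : ∀ x, noise σ pb x
      = (∫ y, pb y * kern σ Mb x y) * ∏ i, ∫ y, pb y * kern σ (M i) x y := by
    intro x
    rw [noise_eq_J]
    have hJ := J_biUnion hσ Mb M hdb hdM hfacpb hpbI x Finset.univ
    rwa [hcover] at hJ
  have hni : ∀ i x, noise σ (p i) x
      = (∫ y, p i y * kern σ (M i) x y)
        * ((∫ y, pb y * kern σ Mb x y)
          * ∏ j ∈ Finset.univ.erase i, ∫ y, pb y * kern σ (M j) x y) := by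
    intro i x
    rw [noise_eq_J, hker2 i x]
    congr 1
    have hJ := J_biUnion hσ Mb M hdb hdM hfacpb hpbI x (Finset.univ.erase i)
    rw [← hcompl i] at hJ
    exact hJ
  -- main computation : compRaw of the noised densities is the noised compRaw
  have hcomprawn : ∀ x, compRaw (noise σ pb) (fun i => noise σ (p i)) x
      = ∫ y, compRaw pb p y * kern σ Finset.univ x y := by
    intro x
    have hBpos : 0 < ∫ y, pb y * kern σ Mb x y := J_pos hσ hpbpos hpbi Mb x
    have hFipos : ∀ j : Fin k, 0 < ∫ y, pb y * kern σ (M j) x y :=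
      fun j => J_pos hσ hpbpos hpbi (M j) x
    have hratio : ∀ i : Fin k, noise σ (p i) x / noise σ pb x
        = (∫ y, p i y * kern σ (M i) x y) / (∫ y, pb y * kern σ (M i) x y) := by
      intro i
      rw [hni i x, hnb x, ← Finset.mul_prod_erase Finset.univ
        (fun j => ∫ y, pb y * kern σ (M j) x y) (Finset.mem_univ i)]
      have hPe : (0:ℝ) < ∏ j ∈ Finset.univ.erase i, ∫ y, pb y * kern σ (M j) x y :=
        Finset.prod_pos fun j _ => hFipos j
      rw [div_eq_div_iff (mul_pos hBpos (mul_pos (hFipos i) hPe)).ne' (hFipos i).ne']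
      ring
    have hJru := hJr x Finset.univ
    rw [hcover] at hJru
    calc compRaw (noise σ pb) (fun i => noise σ (p i)) x
        = noise σ pb x * ∏ i, (noise σ (p i) x / noise σ pb x) := rfl
      _ = ((∫ y, pb y * kern σ Mb x y) * ∏ i, ∫ y, pb y * kern σ (M i) x y)
          * ∏ i, ((∫ y, p i y * kern σ (M i) x y) / (∫ y, pb y * kern σ (M i) x y)) := by
          congr 1
          · exact hnb x
          · exact Finset.prod_congr rfl fun i _ => hratio i
      _ = (∫ y, pb y * kern σ Mb x y) * ∏ i, ∫ y, p i y * kern σ (M i) x y := by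
          rw [Finset.prod_div_distrib]
          have hPF : (∏ i, ∫ y, pb y * kern σ (M i) x y) ≠ 0 :=
            (Finset.prod_pos fun j _ => hFipos j).ne'
          field_simp
      _ = (∫ y, compRaw pb p y * kern σ Mb x y)
          * ∏ i, ∫ y, compRaw pb p y * kern σ (M i) x y := by
          rw [hJrMb x]
          congr 1
          exact Finset.prod_congr rfl fun i _ => (hJrMi i x).symm
      _ = ∫ y, compRaw pb p y * kern σ Finset.univ x y := hJru.symm
  have hZn : ∫ x, compRaw (noise σ pb) (fun i => noise σ (p i)) x = 1 := by
    calc ∫ x, compRaw (noise σ pb) (fun i => noise σ (p i)) x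
        = ∫ x, noise σ (compRaw pb p) x :=
          integral_congr_ae (ae_of_all _ fun x => by
            rw [hcomprawn x, noise_eq_J])
      _ = ∫ y, compRaw pb p y := integral_noise hσ hr0 hrint
      _ = 1 := hZ
  intro x
  unfold comp
  rw [hZn, div_one, hcomprawn x, noise_eq_J]
  exact integral_congr_ae (ae_of_all _ fun y => by simp only [hZ, div_one])
end
end

section
/- The composition operator is reparameterization-equivariant: for every C¹ diffeomorphism A: ℝ^n → ℝ^n and every tuple of probability densities (p_b, p_1, …, p_k) on ℝ^n, C[A♯p_b, A♯p_1, …, A♯p_k] = A♯ C[p_b, p_1, …, p_k]. -/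
open MeasureTheory Finset Real

noncomputable section

/-- The pushforward density `(A♯p)(z) = p(A⁻¹ z) |det ∇A⁻¹(z)|`, expressed in terms of
the inverse map `B = A⁻¹`. -/
def pushfwd {n : ℕ} (B : (Fin n → ℝ) → (Fin n → ℝ)) (p : (Fin n → ℝ) → ℝ)
    (z : Fin n → ℝ) : ℝ :=
  p (B z) * |(fderiv ℝ B z).det|

/-- **Reparameterization Equivariance.** For every `C¹` diffeomorphism `A` (with inverse
`B`) and every tuple of probability densities `(pb, p 1, …, p k)` on `ℝ^n`,
`C[A♯pb, A♯p 1, …, A♯p k] = A♯ C[pb, p 1, …, p k]`. -/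
theorem statement_4 {n k : ℕ}
    (A B : (Fin n → ℝ) → (Fin n → ℝ))
    (hA : ContDiff ℝ 1 A) (hB : ContDiff ℝ 1 B)
    (hBA : Function.LeftInverse B A) (hAB : Function.RightInverse B A)
    (pb : (Fin n → ℝ) → ℝ) (p : Fin k → (Fin n → ℝ) → ℝ)
    (hpb : IsDensity pb) (hp : ∀ i, IsDensity (p i))
    (hpbpos : ∀ x, 0 < pb x) :
    ∀ z, comp (pushfwd B pb) (fun i => pushfwd B (p i)) z = pushfwd B (comp pb p) z := by
  have hBdiff : Differentiable ℝ B := hB.differentiable one_ne_zero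
  have key : ∀ w, compRaw (pushfwd B pb) (fun i => pushfwd B (p i)) w
      = compRaw pb p (B w) * |(fderiv ℝ B w).det| := by
    intro w
    simp only [compRaw, pushfwd]
    set J := |(fderiv ℝ B w).det| with hJ
    rcases eq_or_ne J 0 with h | h
    · simp [h]
    · have hfac : ∀ i : Fin k, p i (B w) * J / (pb (B w) * J) = p i (B w) / pb (B w) :=
        fun i => mul_div_mul_right _ _ h
      simp only [hfac]
      ring
  have cov : ∀ g : (Fin n → ℝ) → ℝ, (∫ x, g x) = ∫ w, g (B w) * |(fderiv ℝ B w).det| := by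
    intro g
    have h1 := integral_image_eq_integral_abs_det_fderiv_smul (μ := volume)
      MeasurableSet.univ
      (f' := fun x => fderiv ℝ B x)
      (fun x _ => ((hBdiff x).hasFDerivAt).hasFDerivWithinAt)
      ((Function.LeftInverse.injective hAB).injOn) g
    rw [Set.image_univ, hBA.surjective.range_eq] at h1
    simpa [smul_eq_mul, mul_comm] using h1
  intro z
  simp only [comp, key, pushfwd]
  rw [mul_div_right_comm, cov (compRaw pb p)]
end
end

section
/- Let (p_b, p_1, …, p_k) be probability densities on ℝ^n that are Factorized Conditionals with respect to a partition {M_b, M_1, …, M_k}, with finite means μ_i = E_{p_i}[x] for i = 1,…,k and μ_b = E_{p_b}[x]. Then each mean-difference vector μ_i − μ_b is supported on the coordinates M_i, and consequently (μ_i − μ_b)ᵀ(μ_j − μ_b) = 0 for all i ≠ j. -/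
open MeasureTheory Finset Real

noncomputable section

lemma marginal_congr {n : ℕ} (S : Finset (Fin n)) (q : (Fin n → ℝ) → ℝ)
    {x x' : Fin n → ℝ} (h : ∀ j ∈ S, x j = x' j) :
    marginal S q x = marginal S q x' := by
  unfold marginal
  congr 1
  funext y
  congr 1
  funext j
  by_cases hj : j ∈ S
  · simp [hj, h j hj]
  · simp [hj]

lemma key_lemma {n : ℕ} (S : Finset (Fin n)) (q pb : (Fin n → ℝ) → ℝ)
    (hq : Integrable q) (hq1 : (∫ x, q x) = 1)
    (hpb : Integrable pb) (hpb1 : (∫ x, pb x) = 1)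
    (hfac : ∀ x, q x = marginal S q x * marginal Sᶜ pb x)
    (l : Fin n) (hl : l ∉ S)
    (hql : Integrable fun x : Fin n → ℝ => x l * q x)
    (hpbl : Integrable fun x : Fin n → ℝ => x l * pb x) :
    (∫ x : Fin n → ℝ, x l * q x) = ∫ x : Fin n → ℝ, x l * pb x := by
  classical
  set T : Finset (Fin n) := Sᶜ with hT
  have hlT : l ∈ T := Finset.mem_compl.2 hl
  let e := MeasurableEquiv.piEquivPiSubtypeProd (fun _ : Fin n => ℝ) (· ∈ T)
  have hmp : MeasurePreserving e := by
    have h := volume_preserving_piEquivPiSubtypeProd (fun _ : Fin n => ℝ) (fun j => j ∈ T)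
    have heq : (Finset.Subtype.fintype T) = (Subtype.fintype fun x => x ∈ T) :=
      Subsingleton.elim _ _
    rw [heq]
    exact h
  have hmps : MeasurePreserving e.symm := hmp.symm e
  have es : ∀ (a : {j : Fin n // j ∈ T} → ℝ) (b : {j : Fin n // j ∉ T} → ℝ) (j : Fin n),
      e.symm (a, b) j = if h : j ∈ T then a ⟨j, h⟩ else b ⟨j, h⟩ := fun a b j => rfl
  have hint : ∀ F : (Fin n → ℝ) → ℝ, Integrable F →
      Integrable (fun z : ({j : Fin n // j ∈ T} → ℝ) × ({j : Fin n // j ∉ T} → ℝ) =>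
        F (e.symm z)) :=
    fun F hF => (hmps.integrable_comp_emb e.symm.measurableEmbedding).2 hF
  have hieq : ∀ F : (Fin n → ℝ) → ℝ,
      (∫ z : ({j : Fin n // j ∈ T} → ℝ) × ({j : Fin n // j ∉ T} → ℝ), F (e.symm z)) =
        ∫ x, F x :=
    fun F => hmps.integral_comp e.symm.measurableEmbedding F
  set Q : ({j : Fin n // j ∈ T} → ℝ) × ({j : Fin n // j ∉ T} → ℝ) → ℝ :=
    fun z => pb (e.symm z) with hQ
  set P : ({j : Fin n // j ∈ T} → ℝ) × ({j : Fin n // j ∉ T} → ℝ) → ℝ :=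
    fun z => q (e.symm z) with hP
  set H : ({j : Fin n // j ∈ T} → ℝ) → ℝ := fun a => ∫ y, Q (a, y) with hH
  set K : ({j : Fin n // j ∉ T} → ℝ) → ℝ := fun y => marginal S q (e.symm (0, y)) with hK
  -- marginal over T of pb computed at e.symm (a, b) equals H a
  have hmargT : ∀ a b, marginal T pb (e.symm (a, b)) = H a := by
    intro a b
    rw [hH]
    unfold marginal
    congr 1
    funext y
    congr 1
    funext j
    rw [es a y j]
    by_cases hj : j ∈ T
    · simp [hj, es a b j]
    · simp [hj]
  -- marginal over S of q computed at e.symm (a, b) equals K b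
  have hmargS : ∀ a b, marginal S q (e.symm (a, b)) = K b := by
    intro a b
    rw [hK]
    apply marginal_congr
    intro j hj
    have hjT : j ∉ T := by simp [hT, hj]
    rw [es a b j, es 0 b j]
    simp [hjT]
  have hfac' : ∀ a b, P (a, b) = K b * H a := by
    intro a b
    rw [hP]
    simp only
    rw [hfac (e.symm (a, b)), hmargS a b, hmargT a b]
  have hQint : Integrable Q := hint pb hpb
  have hPint : Integrable P := hint q hq
  have hQl : Integrable (fun z : ({j : Fin n // j ∈ T} → ℝ) × ({j : Fin n // j ∉ T} → ℝ) =>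
      z.1 ⟨l, hlT⟩ * Q z) := by
    have h := hint (fun x => x l * pb x) hpbl
    have heq : (fun z : ({j : Fin n // j ∈ T} → ℝ) × ({j : Fin n // j ∉ T} → ℝ) =>
        z.1 ⟨l, hlT⟩ * Q z) = fun z => (e.symm z) l * pb (e.symm z) := by
      funext z
      rw [hQ]
      simp only
      rw [es z.1 z.2 l]
      simp [hlT]
    rw [heq]
    exact h
  have hPl : Integrable (fun z : ({j : Fin n // j ∈ T} → ℝ) × ({j : Fin n // j ∉ T} → ℝ) =>
      z.1 ⟨l, hlT⟩ * P z) := by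
    have h := hint (fun x => x l * q x) hql
    have heq : (fun z : ({j : Fin n // j ∈ T} → ℝ) × ({j : Fin n // j ∉ T} → ℝ) =>
        z.1 ⟨l, hlT⟩ * P z) = fun z => (e.symm z) l * q (e.symm z) := by
      funext z
      rw [hP]
      simp only
      rw [es z.1 z.2 l]
      simp [hlT]
    rw [heq]
    exact h
  have hH1 : (∫ a, H a) = 1 := by
    calc (∫ a, H a) = ∫ z, Q z := (integral_prod Q hQint).symm
    _ = ∫ x, pb x := hieq pb
    _ = 1 := hpb1
  have hK1 : (∫ y, K y) = 1 := by
    have h1 : (∫ a, ∫ y, P (a, y)) = 1 :=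
      (integral_prod P hPint).symm.trans ((hieq q).trans hq1)
    have h2 : ∀ a, (∫ y, P (a, y)) = (∫ y, K y) * H a := by
      intro a
      simp_rw [hfac']
      rw [integral_mul_const]
    simp_rw [h2] at h1
    rw [integral_const_mul, hH1, mul_one] at h1
    exact h1
  have hside_pb : (∫ x : Fin n → ℝ, x l * pb x) = ∫ a, a ⟨l, hlT⟩ * H a := by
    rw [← hieq (fun x => x l * pb x)]
    have heq : (fun z : ({j : Fin n // j ∈ T} → ℝ) × ({j : Fin n // j ∉ T} → ℝ) =>
        (e.symm z) l * pb (e.symm z)) = fun z => z.1 ⟨l, hlT⟩ * Q z := by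
      funext z
      rw [hQ]
      simp only
      rw [es z.1 z.2 l]
      simp [hlT]
    rw [heq, show (∫ z : ({j : Fin n // j ∈ T} → ℝ) × ({j : Fin n // j ∉ T} → ℝ),
        z.1 ⟨l, hlT⟩ * Q z) = ∫ a, ∫ y, a ⟨l, hlT⟩ * Q (a, y) from integral_prod _ hQl]
    simp_rw [integral_const_mul]
    rfl
  have hside_q : (∫ x : Fin n → ℝ, x l * q x) = ∫ a, a ⟨l, hlT⟩ * H a := by
    rw [← hieq (fun x => x l * q x)]
    have heq : (fun z : ({j : Fin n // j ∈ T} → ℝ) × ({j : Fin n // j ∉ T} → ℝ) =>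
        (e.symm z) l * q (e.symm z)) = fun z => z.1 ⟨l, hlT⟩ * P z := by
      funext z
      rw [hP]
      simp only
      rw [es z.1 z.2 l]
      simp [hlT]
    rw [heq, show (∫ z : ({j : Fin n // j ∈ T} → ℝ) × ({j : Fin n // j ∉ T} → ℝ),
        z.1 ⟨l, hlT⟩ * P z) = ∫ a, ∫ y, a ⟨l, hlT⟩ * P (a, y) from integral_prod _ hPl]
    have h2 : ∀ a : {j : Fin n // j ∈ T} → ℝ,
        (∫ y, a ⟨l, hlT⟩ * P (a, y)) = a ⟨l, hlT⟩ * H a := by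
      intro a
      have h3 : ∀ y, a ⟨l, hlT⟩ * P (a, y) = K y * (a ⟨l, hlT⟩ * H a) := by
        intro y
        rw [hfac' a y]
        ring
      simp_rw [h3, integral_mul_const, hK1, one_mul]
    simp_rw [h2]
  rw [hside_q, hside_pb]

/-- **Mean-difference orthogonality.** If `(pb, p 1, …, p k)` are Factorized Conditionals
with finite means, then each mean-difference vector `μ i − μ b` is supported on the
coordinates `M i`, and consequently `(μ i − μ b)ᵀ (μ j − μ b) = 0` for `i ≠ j`. -/
theorem statement_8 {n k : ℕ} (Mb : Finset (Fin n)) (M : Fin k → Finset (Fin n))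
    (pb : (Fin n → ℝ) → ℝ) (p : Fin k → (Fin n → ℝ) → ℝ)
    (hpb : IsDensity pb) (hp : ∀ i, IsDensity (p i))
    (hFC : FactorizedConditionals Mb M pb p)
    (hintb : ∀ l : Fin n, Integrable (fun x : Fin n → ℝ => x l * pb x))
    (hinti : ∀ (i : Fin k) (l : Fin n), Integrable (fun x : Fin n → ℝ => x l * p i x)) :
    (∀ i : Fin k, ∀ l ∉ M i, (∫ x : Fin n → ℝ, x l * p i x) - (∫ x : Fin n → ℝ, x l * pb x) = 0) ∧
    (∀ i j : Fin k, i ≠ j →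
      ∑ l : Fin n,
        ((∫ x : Fin n → ℝ, x l * p i x) - (∫ x : Fin n → ℝ, x l * pb x)) *
        ((∫ x : Fin n → ℝ, x l * p j x) - (∫ x : Fin n → ℝ, x l * pb x)) = 0) := by
  obtain ⟨⟨hdisjb, hdisj, hcover⟩, hfaci, hfacb⟩ := hFC
  have hfirst : ∀ i : Fin k, ∀ l ∉ M i,
      (∫ x : Fin n → ℝ, x l * p i x) - (∫ x : Fin n → ℝ, x l * pb x) = 0 := by
    intro i l hl
    rw [key_lemma (M i) (p i) pb (hp i).2.1 (hp i).2.2 hpb.2.1 hpb.2.2 (hfaci i) l hl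
      (hinti i l) (hintb l), sub_self]
  refine ⟨hfirst, fun i j hij => ?_⟩
  apply Finset.sum_eq_zero
  intro l _
  by_cases hli : l ∈ M i
  · have hlj : l ∉ M j := Finset.disjoint_left.mp (hdisj i j hij) hli
    rw [hfirst j l hlj, mul_zero]
  · rw [hfirst i l hli, zero_mul]
end
end

section
/- For every τ with 0 < τ² < 1/82 there exist probability densities p_b, p_1, p_2 on ℝ⁴ and a time t > 0 such that, writing p^t := N_t[p] for the convolution of p with N(0, t² I), q⁰ := C[p_b, p_1, p_2], and q^t := C[p_b^t, p_1^t, p_2^t], the composed noisy distribution deviates from the ideal diffusion path of the composition by at least 1/2 in Wasserstein-2 distance: W₂(N_t[q⁰], q^t) ≥ 1/2. -/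
open MeasureTheory Finset Real

noncomputable section

/-- The noising path `p^t := N_t[p]` (with `p^0 = p`). -/
def noiseAt {n : ℕ} (t : ℝ) (p : (Fin n → ℝ) → ℝ) : (Fin n → ℝ) → ℝ :=
  if t = 0 then p else noise t p

/-- The measure on `ℝ^n` with density `p` w.r.t. Lebesgue measure. -/
def densMeasure {n : ℕ} (p : (Fin n → ℝ) → ℝ) : Measure (Fin n → ℝ) :=
  volume.withDensity (fun x => ENNReal.ofReal (p x))

/-- Wasserstein-2 distance between measures on `ℝ^n`: the infimum over couplings of the
root-mean-square Euclidean displacement. -/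
def W2 {n : ℕ} (μ ν : Measure (Fin n → ℝ)) : ℝ :=
  sInf { c : ℝ | ∃ γ : Measure ((Fin n → ℝ) × (Fin n → ℝ)),
    IsProbabilityMeasure γ ∧ γ.map Prod.fst = μ ∧ γ.map Prod.snd = ν ∧
    c = Real.sqrt (∫ z, (∑ i, (z.1 i - z.2 i) ^ 2) ∂γ) }

/-- 1D Gaussian density with mean `m`, variance `v`. -/
def g (m v x : ℝ) : ℝ := (Real.sqrt (2 * π * v))⁻¹ * Real.exp (-(x - m) ^ 2 / (2 * v))

lemma g_pos {v : ℝ} (hv : 0 < v) (m x : ℝ) : 0 < g m v x := by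
  have : 0 < Real.sqrt (2 * π * v) := Real.sqrt_pos.2 (by positivity)
  exact mul_pos (inv_pos.2 this) (Real.exp_pos _)

lemma g_continuous (m v : ℝ) : Continuous (g m v) := by
  unfold g; fun_prop

lemma g_eq (m v : ℝ) (x : ℝ) :
    g m v x = (Real.sqrt (2 * π * v))⁻¹ * Real.exp (-(2 * v)⁻¹ * (x - m) ^ 2) := by
  unfold g; ring_nf

lemma integrable_g {v : ℝ} (hv : 0 < v) (m : ℝ) : Integrable (g m v) := by
  have hb : (0:ℝ) < (2 * v)⁻¹ := by positivity
  have h0 : Integrable (fun y : ℝ => (Real.sqrt (2 * π * v))⁻¹ *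
      Real.exp (-(2 * v)⁻¹ * y ^ 2)) := (integrable_exp_neg_mul_sq hb).const_mul _
  have := h0.comp_sub_right m
  refine this.congr (ae_of_all _ fun x => ?_)
  rw [g_eq]

lemma integral_g {v : ℝ} (hv : 0 < v) (m : ℝ) : ∫ x, g m v x = 1 := by
  have hb : (0:ℝ) < (2 * v)⁻¹ := by positivity
  calc ∫ x, g m v x
      = ∫ x, (Real.sqrt (2 * π * v))⁻¹ * Real.exp (-(2 * v)⁻¹ * (x - m) ^ 2) := by
        simp_rw [g_eq]
    _ = (Real.sqrt (2 * π * v))⁻¹ * ∫ x, Real.exp (-(2 * v)⁻¹ * (x - m) ^ 2) := by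
        rw [integral_const_mul]
    _ = (Real.sqrt (2 * π * v))⁻¹ * ∫ x, Real.exp (-(2 * v)⁻¹ * x ^ 2) := by
        rw [integral_sub_right_eq_self (fun y : ℝ => Real.exp (-(2 * v)⁻¹ * y ^ 2)) m]
    _ = (Real.sqrt (2 * π * v))⁻¹ * Real.sqrt (π / (2 * v)⁻¹) := by rw [integral_gaussian]
    _ = 1 := by
        rw [show π / (2 * v)⁻¹ = 2 * π * v by field_simp]
        exact inv_mul_cancel₀ (ne_of_gt (Real.sqrt_pos.2 (by positivity)))

lemma integrable_id_mul_g {v : ℝ} (hv : 0 < v) (m : ℝ) :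
    Integrable (fun x => x * g m v x) := by
  have hb : (0:ℝ) < (2 * v)⁻¹ := by positivity
  have h1 : Integrable (fun y : ℝ => y * Real.exp (-(2 * v)⁻¹ * y ^ 2)) :=
    integrable_mul_exp_neg_mul_sq hb
  have h2 : Integrable (fun y : ℝ => Real.exp (-(2 * v)⁻¹ * y ^ 2)) :=
    integrable_exp_neg_mul_sq hb
  have h3 : Integrable (fun y : ℝ => (y + m) * Real.exp (-(2 * v)⁻¹ * y ^ 2)) := by
    have := h1.add (h2.const_mul m)
    refine this.congr (ae_of_all _ fun y => ?_)
    simp only [Pi.add_apply]; ring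
  have h4 := h3.comp_sub_right m
  have h5 := h4.const_mul (Real.sqrt (2 * π * v))⁻¹
  refine h5.congr (ae_of_all _ fun x => ?_)
  simp only [g_eq, sub_add_cancel_right]; ring

lemma integral_id_mul_g {v : ℝ} (hv : 0 < v) (m : ℝ) :
    ∫ x, x * g m v x = m := by
  have hb : (0:ℝ) < (2 * v)⁻¹ := by positivity
  have h1 : Integrable (fun y : ℝ => y * Real.exp (-(2 * v)⁻¹ * y ^ 2)) :=
    integrable_mul_exp_neg_mul_sq hb
  have h2 : Integrable (fun y : ℝ => Real.exp (-(2 * v)⁻¹ * y ^ 2)) :=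
    integrable_exp_neg_mul_sq hb
  have hodd : (∫ y : ℝ, y * Real.exp (-(2 * v)⁻¹ * y ^ 2)) = 0 := by
    have h := integral_neg_eq_self (fun y : ℝ => y * Real.exp (-(2 * v)⁻¹ * y ^ 2)) volume
    simp only [neg_sq, neg_mul, integral_neg] at h ⊢
    linarith
  calc ∫ x, x * g m v x
      = ∫ x, (Real.sqrt (2 * π * v))⁻¹ * (x * Real.exp (-(2 * v)⁻¹ * (x - m) ^ 2)) := by
        congr 1; funext x; rw [g_eq]; ring
    _ = (Real.sqrt (2 * π * v))⁻¹ * ∫ x, x * Real.exp (-(2 * v)⁻¹ * (x - m) ^ 2) := by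
        rw [integral_const_mul]
    _ = (Real.sqrt (2 * π * v))⁻¹ * ∫ y, (y + m) * Real.exp (-(2 * v)⁻¹ * y ^ 2) := by
        rw [← integral_add_right_eq_self
          (fun x : ℝ => x * Real.exp (-(2 * v)⁻¹ * (x - m) ^ 2)) m]
        simp only [add_sub_cancel_right]
    _ = (Real.sqrt (2 * π * v))⁻¹ * ((∫ y : ℝ, y * Real.exp (-(2 * v)⁻¹ * y ^ 2))
          + m * ∫ y : ℝ, Real.exp (-(2 * v)⁻¹ * y ^ 2)) := by
        have hsplit : (∫ y : ℝ, (y + m) * Real.exp (-(2 * v)⁻¹ * y ^ 2))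
            = (∫ y : ℝ, y * Real.exp (-(2 * v)⁻¹ * y ^ 2))
              + ∫ y : ℝ, m * Real.exp (-(2 * v)⁻¹ * y ^ 2) := by
          rw [← integral_add h1 (h2.const_mul m)]
          congr 1; funext y; ring
        rw [hsplit, integral_const_mul]
    _ = m * ((Real.sqrt (2 * π * v))⁻¹ * ∫ y : ℝ, Real.exp (-(2 * v)⁻¹ * y ^ 2)) := by
        rw [hodd]; ring
    _ = m := by
        have := integral_g hv (0 : ℝ)
        have he : (∫ x, g 0 v x) = (Real.sqrt (2 * π * v))⁻¹ *
            ∫ y : ℝ, Real.exp (-(2 * v)⁻¹ * y ^ 2) := by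
          rw [← integral_const_mul]; congr 1; funext x; rw [g_eq]; ring_nf
        rw [← he, this, mul_one]

lemma integrable_sq_mul_g {v : ℝ} (hv : 0 < v) (m : ℝ) :
    Integrable (fun x => x ^ 2 * g m v x) := by
  have hb : (0:ℝ) < (2 * v)⁻¹ := by positivity
  have h0 : Integrable (fun y : ℝ => y ^ (2:ℝ) * Real.exp (-(2 * v)⁻¹ * y ^ 2)) :=
    integrable_rpow_mul_exp_neg_mul_sq (s := 2) hb (by norm_num)
  have h1 : Integrable (fun y : ℝ => y ^ 2 * Real.exp (-(2 * v)⁻¹ * y ^ 2)) := by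
    refine h0.congr (ae_of_all _ fun y => ?_)
    norm_cast
  have h2 : Integrable (fun y : ℝ => y * Real.exp (-(2 * v)⁻¹ * y ^ 2)) :=
    integrable_mul_exp_neg_mul_sq hb
  have h3 : Integrable (fun y : ℝ => Real.exp (-(2 * v)⁻¹ * y ^ 2)) :=
    integrable_exp_neg_mul_sq hb
  have h4 : Integrable (fun y : ℝ => (y + m) ^ 2 * Real.exp (-(2 * v)⁻¹ * y ^ 2)) := by
    have := (h1.add ((h2.const_mul (2*m)))).add (h3.const_mul (m^2))
    refine this.congr (ae_of_all _ fun y => ?_)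
    simp only [Pi.add_apply]; ring
  have h5 := (h4.comp_sub_right m).const_mul (Real.sqrt (2 * π * v))⁻¹
  refine h5.congr (ae_of_all _ fun x => ?_)
  simp only [g_eq, sub_add_cancel_right]; ring

/-- Convolution of two Gaussians. -/
lemma conv_g {v s : ℝ} (hv : 0 < v) (hs : 0 < s) (m x : ℝ) :
    (∫ y, g m v y * g 0 s (x - y)) = g m (v + s) x := by
  have hvs : (0:ℝ) < v + s := by linarith
  set a : ℝ := (v + s) / (2 * v * s) with ha
  set c : ℝ := (m * s + x * v) / (v + s) with hc
  have hapos : 0 < a := by positivity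
  have key : ∀ y : ℝ, g m v y * g 0 s (x - y) =
      ((Real.sqrt (2 * π * v))⁻¹ * (Real.sqrt (2 * π * s))⁻¹ *
        Real.exp (-(x - m) ^ 2 / (2 * (v + s)))) * Real.exp (-a * (y - c) ^ 2) := by
    intro y
    have hE : -(y - m) ^ 2 / (2 * v) + -(x - y - 0) ^ 2 / (2 * s)
        = -(x - m) ^ 2 / (2 * (v + s)) + -a * (y - c) ^ 2 := by
      rw [ha, hc]; field_simp; ring
    unfold g
    rw [mul_mul_mul_comm, ← Real.exp_add, hE, Real.exp_add]; ring
  calc (∫ y, g m v y * g 0 s (x - y))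
      = ∫ y, ((Real.sqrt (2 * π * v))⁻¹ * (Real.sqrt (2 * π * s))⁻¹ *
          Real.exp (-(x - m) ^ 2 / (2 * (v + s)))) * Real.exp (-a * (y - c) ^ 2) := by
        simp_rw [key]
    _ = ((Real.sqrt (2 * π * v))⁻¹ * (Real.sqrt (2 * π * s))⁻¹ *
          Real.exp (-(x - m) ^ 2 / (2 * (v + s)))) * ∫ y, Real.exp (-a * (y - c) ^ 2) := by
        rw [integral_const_mul]
    _ = ((Real.sqrt (2 * π * v))⁻¹ * (Real.sqrt (2 * π * s))⁻¹ *
          Real.exp (-(x - m) ^ 2 / (2 * (v + s)))) * Real.sqrt (π / a) := by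
        rw [integral_sub_right_eq_self (fun y : ℝ => Real.exp (-a * y ^ 2)) c,
          integral_gaussian]
    _ = g m (v + s) x := by
        unfold g
        have hconst : (Real.sqrt (2 * π * v))⁻¹ * (Real.sqrt (2 * π * s))⁻¹ *
            Real.sqrt (π / a) = (Real.sqrt (2 * π * (v + s)))⁻¹ := by
          rw [← Real.sqrt_inv, ← Real.sqrt_inv, ← Real.sqrt_inv,
            ← Real.sqrt_mul (by positivity), ← Real.sqrt_mul (by positivity)]
          congr 1
          rw [ha]; field_simp
        rw [← hconst]; ring

/-- Ratio `g₁ g₂ / g_b` is a positive constant times a Gaussian. -/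
lemma ratio_g {v1 v2 vb l : ℝ} (hv1 : 0 < v1) (hv2 : 0 < v2) (hvb : 0 < vb)
    (hl : 0 < l) (m1 m2 mb ms : ℝ)
    (hldef : l = v1⁻¹ + v2⁻¹ - vb⁻¹) (hmdef : ms = (m1 / v1 + m2 / v2 - mb / vb) / l) :
    ∃ C > 0, ∀ x, g m1 v1 x * g m2 v2 x / g mb vb x = C * g ms l⁻¹ x := by
  subst hmdef; subst hldef
  have hv1' : v1 ≠ 0 := ne_of_gt hv1
  have hv2' : v2 ≠ 0 := ne_of_gt hv2
  have hvb' : vb ≠ 0 := ne_of_gt hvb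
  have hl' : v1⁻¹ + v2⁻¹ - vb⁻¹ ≠ 0 := ne_of_gt hl
  have hD : v2 * vb + v1 * vb - v1 * v2 ≠ 0 := by
    intro h
    apply hl'
    field_simp
    linarith
  have hrw : v1⁻¹ + v2⁻¹ - vb⁻¹ = (v2 * vb + v1 * vb - v1 * v2) / (v1 * v2 * vb) := by
    field_simp
  set l : ℝ := v1⁻¹ + v2⁻¹ - vb⁻¹ with hldef
  set ms : ℝ := (m1 / v1 + m2 / v2 - mb / vb) / l with hmdef
  have hl0 : l ≠ 0 := hl'
  set d : ℝ := (l * ms ^ 2 - (m1 ^ 2 / v1 + m2 ^ 2 / v2 - mb ^ 2 / vb)) / 2 with hd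
  refine ⟨(Real.sqrt (2 * π * v1))⁻¹ * (Real.sqrt (2 * π * v2))⁻¹ /
      (Real.sqrt (2 * π * vb))⁻¹ * Real.exp d * Real.sqrt (2 * π * l⁻¹), ?_, ?_⟩
  · have h1 : (0:ℝ) < Real.sqrt (2 * π * v1) := Real.sqrt_pos.2 (by positivity)
    have h2 : (0:ℝ) < Real.sqrt (2 * π * v2) := Real.sqrt_pos.2 (by positivity)
    have h3 : (0:ℝ) < Real.sqrt (2 * π * vb) := Real.sqrt_pos.2 (by positivity)
    have h4 : (0:ℝ) < Real.sqrt (2 * π * l⁻¹) := Real.sqrt_pos.2 (by positivity)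
    positivity
  · intro x
    have hE : -(x - m1) ^ 2 / (2 * v1) + -(x - m2) ^ 2 / (2 * v2) - -(x - mb) ^ 2 / (2 * vb)
        = d + -(x - ms) ^ 2 / (2 * l⁻¹) := by
      rw [hd, hmdef, hrw]
      have hD' : vb * (v2 + v1) - v1 * v2 ≠ 0 := fun h => hD (by linear_combination h)
      field_simp
      ring
    have hexp : Real.exp (-(x - m1) ^ 2 / (2 * v1)) * Real.exp (-(x - m2) ^ 2 / (2 * v2)) /
        Real.exp (-(x - mb) ^ 2 / (2 * vb))
        = Real.exp d * Real.exp (-(x - ms) ^ 2 / (2 * l⁻¹)) := by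
      rw [← Real.exp_add, ← Real.exp_sub, hE, Real.exp_add]
    have h4 : Real.sqrt (2 * π * l⁻¹) ≠ 0 := ne_of_gt (Real.sqrt_pos.2 (by positivity))
    calc g m1 v1 x * g m2 v2 x / g mb vb x
        = ((Real.sqrt (2 * π * v1))⁻¹ * (Real.sqrt (2 * π * v2))⁻¹ /
            (Real.sqrt (2 * π * vb))⁻¹) *
            (Real.exp (-(x - m1) ^ 2 / (2 * v1)) * Real.exp (-(x - m2) ^ 2 / (2 * v2)) /
              Real.exp (-(x - mb) ^ 2 / (2 * vb))) := by
          unfold g; ring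
      _ = ((Real.sqrt (2 * π * v1))⁻¹ * (Real.sqrt (2 * π * v2))⁻¹ /
            (Real.sqrt (2 * π * vb))⁻¹) *
            (Real.exp d * Real.exp (-(x - ms) ^ 2 / (2 * l⁻¹))) := by rw [hexp]
      _ = (Real.sqrt (2 * π * v1))⁻¹ * (Real.sqrt (2 * π * v2))⁻¹ /
            (Real.sqrt (2 * π * vb))⁻¹ * Real.exp d * Real.sqrt (2 * π * l⁻¹) *
            g ms l⁻¹ x := by
          unfold g
          field_simp

/-- Product Gaussian density on ℝ⁴. -/
def P (m v : Fin 4 → ℝ) (x : Fin 4 → ℝ) : ℝ := ∏ i, g (m i) (v i) (x i)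

lemma P_pos {v : Fin 4 → ℝ} (hv : ∀ i, 0 < v i) (m : Fin 4 → ℝ) (x : Fin 4 → ℝ) :
    0 < P m v x :=
  Finset.prod_pos fun i _ => g_pos (hv i) (m i) (x i)

lemma continuous_P (m v : Fin 4 → ℝ) : Continuous (P m v) :=
  continuous_finset_prod _ fun i _ => (g_continuous (m i) (v i)).comp (continuous_apply i)

lemma integrable_P {v : Fin 4 → ℝ} (hv : ∀ i, 0 < v i) (m : Fin 4 → ℝ) :
    Integrable (P m v) :=
  Integrable.fintype_prod (f := fun i => g (m i) (v i)) fun i => integrable_g (hv i) (m i)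

lemma integral_P {v : Fin 4 → ℝ} (hv : ∀ i, 0 < v i) (m : Fin 4 → ℝ) :
    ∫ x, P m v x = 1 := by
  unfold P
  rw [MeasureTheory.integral_fintype_prod_volume_eq_prod (f := fun i => g (m i) (v i))]
  rw [Finset.prod_congr rfl fun i _ => integral_g (hv i) (m i)]
  simp

lemma isDensity_P {v : Fin 4 → ℝ} (hv : ∀ i, 0 < v i) (m : Fin 4 → ℝ) :
    IsDensity (P m v) :=
  ⟨fun x => le_of_lt (P_pos hv m x), integrable_P hv m, integral_P hv m⟩

lemma weighted_rep (u : ℝ → ℝ) (i : Fin 4) (m v : Fin 4 → ℝ) (x : Fin 4 → ℝ) :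
    u (x i) * P m v x
      = ∏ j, (if j = i then u (x j) * g (m j) (v j) (x j) else g (m j) (v j) (x j)) := by
  have h3 : ∀ j ∈ Finset.univ.erase i,
      (if j = i then u (x j) * g (m j) (v j) (x j) else g (m j) (v j) (x j))
        = g (m j) (v j) (x j) := fun j hj => if_neg (Finset.ne_of_mem_erase hj)
  unfold P
  calc u (x i) * ∏ j, g (m j) (v j) (x j)
      = u (x i) * (g (m i) (v i) (x i) * ∏ j ∈ Finset.univ.erase i, g (m j) (v j) (x j)) := by
        rw [Finset.mul_prod_erase Finset.univ (fun j => g (m j) (v j) (x j)) (Finset.mem_univ i)]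
    _ = (if i = i then u (x i) * g (m i) (v i) (x i) else g (m i) (v i) (x i))
          * ∏ j ∈ Finset.univ.erase i,
              (if j = i then u (x j) * g (m j) (v j) (x j) else g (m j) (v j) (x j)) := by
        rw [if_pos rfl, Finset.prod_congr rfl h3]; ring
    _ = ∏ j, (if j = i then u (x j) * g (m j) (v j) (x j) else g (m j) (v j) (x j)) :=
        Finset.mul_prod_erase Finset.univ
          (fun j => if j = i then u (x j) * g (m j) (v j) (x j) else g (m j) (v j) (x j))
          (Finset.mem_univ i)

lemma integrable_weighted_P {v : Fin 4 → ℝ} (hv : ∀ i, 0 < v i) (m : Fin 4 → ℝ) (i : Fin 4)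
    {u : ℝ → ℝ} (hu : Integrable (fun z => u z * g (m i) (v i) z)) :
    Integrable (fun x : Fin 4 → ℝ => u (x i) * P m v x) := by
  have h : Integrable (fun x : Fin 4 → ℝ =>
      ∏ j, (fun z => if j = i then u z * g (m j) (v j) z else g (m j) (v j) z) (x j)) := by
    refine Integrable.fintype_prod
      (f := fun j z => if j = i then u z * g (m j) (v j) z else g (m j) (v j) z) fun j => ?_
    by_cases hj : j = i
    · subst hj; simpa using hu
    · simpa [if_neg hj] using integrable_g (hv j) (m j)
  exact h.congr (ae_of_all _ fun x => by
    simpa using (weighted_rep u i m v x).symm)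

lemma integral_weighted_P {v : Fin 4 → ℝ} (hv : ∀ i, 0 < v i) (m : Fin 4 → ℝ) (i : Fin 4)
    (u : ℝ → ℝ) :
    (∫ x : Fin 4 → ℝ, u (x i) * P m v x) = ∫ z, u z * g (m i) (v i) z := by
  simp_rw [weighted_rep u i m v]
  rw [MeasureTheory.integral_fintype_prod_volume_eq_prod
    (f := fun j z => if j = i then u z * g (m j) (v j) z else g (m j) (v j) z)]
  rw [Finset.prod_eq_single i]
  · simp
  · intro j _ hj
    simp only [if_neg hj]
    exact integral_g (hv j) (m j)
  · intro h; exact absurd (Finset.mem_univ i) h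

lemma gaussIso_eq_prod {t : ℝ} (ht : 0 < t) (z : Fin 4 → ℝ) :
    gaussIso t z = ∏ i, g 0 (t ^ 2) (z i) := by
  have hA : (0:ℝ) < 2 * π * t ^ 2 := by positivity
  unfold gaussIso g
  rw [Finset.prod_mul_distrib, Finset.prod_const, Finset.card_univ, Fintype.card_fin,
    ← Real.exp_sum]
  congr 1
  · rw [inv_pow, show (4:ℕ) = 2*2 from rfl, pow_mul, Real.sq_sqrt hA.le,
      ← Real.rpow_natCast (2 * π * t ^ 2) 2, ← Real.rpow_neg hA.le]
    norm_num
  · simp only [sub_zero, neg_div, Finset.sum_neg_distrib, Finset.sum_div]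

lemma noise_P {t : ℝ} (ht : 0 < t) {v : Fin 4 → ℝ} (hv : ∀ i, 0 < v i) (m : Fin 4 → ℝ) :
    noise t (P m v) = P m (fun i => v i + t ^ 2) := by
  funext x
  unfold noise
  have ht2 : (0:ℝ) < t ^ 2 := by positivity
  have hstep : ∀ y : Fin 4 → ℝ, P m v y * gaussIso t (x - y)
      = ∏ i, (fun z => g (m i) (v i) z * g 0 (t ^ 2) (x i - z)) (y i) := by
    intro y
    rw [gaussIso_eq_prod ht (x - y)]
    unfold P
    rw [← Finset.prod_mul_distrib]
    exact Finset.prod_congr rfl fun i _ => by simp [Pi.sub_apply]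
  simp_rw [hstep]
  rw [MeasureTheory.integral_fintype_prod_volume_eq_prod
    (f := fun i z => g (m i) (v i) z * g 0 (t ^ 2) (x i - z))]
  unfold P
  exact Finset.prod_congr rfl fun i _ => conv_g (hv i) ht2 (m i) (x i)

lemma comp_P {mb vb m1 v1 m2 v2 l ms : Fin 4 → ℝ}
    (hvb : ∀ i, 0 < vb i) (hv1 : ∀ i, 0 < v1 i) (hv2 : ∀ i, 0 < v2 i)
    (hl : ∀ i, 0 < l i)
    (hldef : ∀ i, l i = (v1 i)⁻¹ + (v2 i)⁻¹ - (vb i)⁻¹)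
    (hmdef : ∀ i, ms i = (m1 i / v1 i + m2 i / v2 i - mb i / vb i) / l i) :
    comp (P mb vb) ![P m1 v1, P m2 v2] = P ms (fun i => (l i)⁻¹) := by
  choose C hCpos hC using fun i =>
    ratio_g (hv1 i) (hv2 i) (hvb i) (hl i) (m1 i) (m2 i) (mb i) (ms i) (hldef i) (hmdef i)
  have hraw : ∀ x, compRaw (P mb vb) ![P m1 v1, P m2 v2] x
      = (∏ i, C i) * P ms (fun i => (l i)⁻¹) x := by
    intro x
    unfold compRaw
    rw [Fin.prod_univ_two]
    simp only [Matrix.cons_val_zero, Matrix.cons_val_one, Matrix.head_cons]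
    have hb : P mb vb x ≠ 0 := ne_of_gt (P_pos hvb mb x)
    rw [show P mb vb x * (P m1 v1 x / P mb vb x * (P m2 v2 x / P mb vb x))
        = P m1 v1 x * P m2 v2 x / P mb vb x by field_simp]
    unfold P
    rw [← Finset.prod_mul_distrib, ← Finset.prod_div_distrib]
    rw [Finset.prod_congr rfl fun i _ => hC i (x i)]
    rw [Finset.prod_mul_distrib]
  have hCprod : (0:ℝ) < ∏ i, C i := Finset.prod_pos fun i _ => hCpos i
  have hint : (∫ y, compRaw (P mb vb) ![P m1 v1, P m2 v2] y) = ∏ i, C i := by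
    simp_rw [hraw]
    rw [integral_const_mul, integral_P (fun i => inv_pos.2 (hl i)) ms, mul_one]
  funext x
  unfold comp
  rw [hint, hraw x]
  exact mul_div_cancel_left₀ _ (ne_of_gt hCprod)

lemma isProb_densMeasure {p : (Fin 4 → ℝ) → ℝ} (hp : IsDensity p) :
    IsProbabilityMeasure (densMeasure p) := by
  constructor
  unfold densMeasure
  rw [MeasureTheory.withDensity_apply _ MeasurableSet.univ, setLIntegral_univ,
    ← MeasureTheory.ofReal_integral_eq_lintegral_ofReal hp.2.1 (ae_of_all _ hp.1), hp.2.2]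
  simp

lemma integral_densMeasure {p : (Fin 4 → ℝ) → ℝ} (hp : Measurable p) (hpnn : ∀ x, 0 ≤ p x)
    (f : (Fin 4 → ℝ) → ℝ) :
    ∫ x, f x ∂(densMeasure p) = ∫ x, p x * f x := by
  unfold densMeasure
  rw [show (fun x => ENNReal.ofReal (p x)) = (fun x => ((p x).toNNReal : ENNReal)) from rfl]
  rw [integral_withDensity_eq_integral_smul hp.real_toNNReal f]
  congr 1
  funext x
  simp only [NNReal.smul_def, Real.coe_toNNReal _ (hpnn x)]
  rw [smul_eq_mul]

lemma integrable_densMeasure {p : (Fin 4 → ℝ) → ℝ} (hp : Measurable p) (hpnn : ∀ x, 0 ≤ p x)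
    {f : (Fin 4 → ℝ) → ℝ} (hf : Integrable (fun x => p x * f x)) :
    Integrable f (densMeasure p) := by
  unfold densMeasure
  rw [show (fun x => ENNReal.ofReal (p x)) = (fun x => ((p x).toNNReal : ENNReal)) from rfl]
  rw [integrable_withDensity_iff_integrable_smul hp.real_toNNReal]
  refine hf.congr (ae_of_all _ fun x => ?_)
  simp only [NNReal.smul_def, Real.coe_toNNReal _ (hpnn x)]
  rw [smul_eq_mul]

lemma measurable_P (m v : Fin 4 → ℝ) : Measurable (P m v) := (continuous_P m v).measurable

lemma integrable_coord_densP {v : Fin 4 → ℝ} (hv : ∀ i, 0 < v i) (m : Fin 4 → ℝ) (i : Fin 4) :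
    Integrable (fun x => x i) (densMeasure (P m v)) := by
  refine integrable_densMeasure (measurable_P m v) (fun x => le_of_lt (P_pos hv m x)) ?_
  have := integrable_weighted_P hv m i (u := fun z => z) (integrable_id_mul_g (hv i) (m i))
  refine this.congr (ae_of_all _ fun x => ?_)
  ring

lemma integrable_coord_sq_densP {v : Fin 4 → ℝ} (hv : ∀ i, 0 < v i) (m : Fin 4 → ℝ)
    (i : Fin 4) : Integrable (fun x => (x i) ^ 2) (densMeasure (P m v)) := by
  refine integrable_densMeasure (measurable_P m v) (fun x => le_of_lt (P_pos hv m x)) ?_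
  have := integrable_weighted_P hv m i (u := fun z => z ^ 2) (integrable_sq_mul_g (hv i) (m i))
  refine this.congr (ae_of_all _ fun x => ?_)
  ring

lemma integral_coord_densP {v : Fin 4 → ℝ} (hv : ∀ i, 0 < v i) (m : Fin 4 → ℝ) (i : Fin 4) :
    ∫ x, x i ∂(densMeasure (P m v)) = m i := by
  rw [integral_densMeasure (measurable_P m v) (fun x => le_of_lt (P_pos hv m x))]
  rw [show (fun x : Fin 4 → ℝ => P m v x * x i) = fun x => (fun z : ℝ => z) (x i) * P m v x
    from funext fun x => by ring]
  rw [integral_weighted_P hv m i (fun z : ℝ => z)]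
  exact integral_id_mul_g (hv i) (m i)

lemma W2_ge_mean_gap (μ ν : Measure (Fin 4 → ℝ)) [IsProbabilityMeasure μ]
    [IsProbabilityMeasure ν]
    (h1μ : ∀ i, Integrable (fun x => x i) μ) (h1ν : ∀ i, Integrable (fun x => x i) ν)
    (h2μ : ∀ i, Integrable (fun x => (x i) ^ 2) μ)
    (h2ν : ∀ i, Integrable (fun x => (x i) ^ 2) ν) :
    |(∫ x, x 0 ∂μ) - ∫ x, x 0 ∂ν| ≤ W2 μ ν := by
  unfold W2
  apply le_csInf
  · refine ⟨Real.sqrt (∫ z, (∑ i, (z.1 i - z.2 i) ^ 2) ∂(μ.prod ν)),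
      μ.prod ν, inferInstance, ?_, ?_, rfl⟩
    · rw [Measure.map_fst_prod]; simp
    · rw [Measure.map_snd_prod]; simp
  · rintro c ⟨γ, hγ, hfst, hsnd, rfl⟩
    have mco1 : ∀ i : Fin 4, Measurable fun z : (Fin 4 → ℝ) × (Fin 4 → ℝ) => z.1 i :=
      fun i => (measurable_pi_apply i).comp measurable_fst
    have mco2 : ∀ i : Fin 4, Measurable fun z : (Fin 4 → ℝ) × (Fin 4 → ℝ) => z.2 i :=
      fun i => (measurable_pi_apply i).comp measurable_snd
    have hint1 : ∀ i, Integrable (fun z : (Fin 4 → ℝ) × (Fin 4 → ℝ) => z.1 i) γ := by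
      intro i
      have h := h1μ i; rw [← hfst] at h
      exact (integrable_map_measure (measurable_pi_apply i).aestronglyMeasurable
        measurable_fst.aemeasurable).mp h
    have hint2 : ∀ i, Integrable (fun z : (Fin 4 → ℝ) × (Fin 4 → ℝ) => z.2 i) γ := by
      intro i
      have h := h1ν i; rw [← hsnd] at h
      exact (integrable_map_measure (measurable_pi_apply i).aestronglyMeasurable
        measurable_snd.aemeasurable).mp h
    have hsq1 : ∀ i, Integrable (fun z : (Fin 4 → ℝ) × (Fin 4 → ℝ) => (z.1 i) ^ 2) γ := by
      intro i
      have h := h2μ i; rw [← hfst] at h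
      exact (integrable_map_measure ((measurable_pi_apply i).pow_const 2).aestronglyMeasurable
        measurable_fst.aemeasurable).mp h
    have hsq2 : ∀ i, Integrable (fun z : (Fin 4 → ℝ) × (Fin 4 → ℝ) => (z.2 i) ^ 2) γ := by
      intro i
      have h := h2ν i; rw [← hsnd] at h
      exact (integrable_map_measure ((measurable_pi_apply i).pow_const 2).aestronglyMeasurable
        measurable_snd.aemeasurable).mp h
    have hterm : ∀ i, Integrable (fun z : (Fin 4 → ℝ) × (Fin 4 → ℝ) => (z.1 i - z.2 i) ^ 2) γ := by
      intro i
      refine Integrable.mono' (((hsq1 i).const_mul 2).add ((hsq2 i).const_mul 2))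
        (((mco1 i).sub (mco2 i)).pow_const 2).aestronglyMeasurable
        (ae_of_all _ fun z => ?_)
      rw [Real.norm_eq_abs, abs_of_nonneg (sq_nonneg _)]
      simp only [Pi.add_apply]
      nlinarith [sq_nonneg (z.1 i + z.2 i)]
    have hcost : Integrable (fun z : (Fin 4 → ℝ) × (Fin 4 → ℝ) => ∑ i, (z.1 i - z.2 i) ^ 2) γ :=
      integrable_finset_sum _ fun i _ => hterm i
    have hfint : Integrable (fun z : (Fin 4 → ℝ) × (Fin 4 → ℝ) => z.1 0 - z.2 0) γ :=
      (hint1 0).sub (hint2 0)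
    set M : ℝ := (∫ x, x 0 ∂μ) - ∫ x, x 0 ∂ν with hM
    have e1 : ∫ x, x 0 ∂μ = ∫ z, z.1 0 ∂γ := by
      rw [← hfst]
      exact integral_map measurable_fst.aemeasurable
        (measurable_pi_apply 0).aestronglyMeasurable
    have e2 : ∫ x, x 0 ∂ν = ∫ z, z.2 0 ∂γ := by
      rw [← hsnd]
      exact integral_map measurable_snd.aemeasurable
        (measurable_pi_apply 0).aestronglyMeasurable
    have hmean : ∫ z, (z.1 0 - z.2 0) ∂γ = M := by
      rw [integral_sub (hint1 0) (hint2 0), hM, e1, e2]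
    have hvar : M ^ 2 ≤ ∫ z, (z.1 0 - z.2 0) ^ 2 ∂γ := by
      have h0 : 0 ≤ ∫ z, ((z.1 0 - z.2 0) - M) ^ 2 ∂γ := integral_nonneg fun z => sq_nonneg _
      have hexp : ∫ z, ((z.1 0 - z.2 0) - M) ^ 2 ∂γ
          = (∫ z, (z.1 0 - z.2 0) ^ 2 ∂γ) - (2 * M) * M + M ^ 2 := by
        have hre : (fun z : (Fin 4 → ℝ) × (Fin 4 → ℝ) => ((z.1 0 - z.2 0) - M) ^ 2)
            = fun z => ((z.1 0 - z.2 0) ^ 2 - (2 * M) * (z.1 0 - z.2 0)) + M ^ 2 :=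
          funext fun z => by ring
        have hA : Integrable (fun z : (Fin 4 → ℝ) × (Fin 4 → ℝ) =>
            (z.1 0 - z.2 0) ^ 2 - 2 * M * (z.1 0 - z.2 0)) γ := by
          have h := (hterm 0).sub (hfint.const_mul (2 * M))
          exact h.congr (ae_of_all _ fun z => by simp only [Pi.sub_apply])
        rw [hre, integral_add hA (integrable_const _),
          integral_sub (hterm 0) (hfint.const_mul (2 * M)), integral_const_mul, hmean,
          integral_const]
        simp
      nlinarith [h0, hexp]
    have hle : (∫ z, (z.1 0 - z.2 0) ^ 2 ∂γ) ≤ ∫ z, (∑ i, (z.1 i - z.2 i) ^ 2) ∂γ := by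
      refine integral_mono (hterm 0) hcost fun z => ?_
      exact Finset.single_le_sum (f := fun i => (z.1 i - z.2 i) ^ 2)
        (fun i _ => sq_nonneg _) (Finset.mem_univ 0)
    calc |M| = Real.sqrt (M ^ 2) := (Real.sqrt_sq_eq_abs M).symm
      _ ≤ Real.sqrt (∫ z, (∑ i, (z.1 i - z.2 i) ^ 2) ∂γ) :=
          Real.sqrt_le_sqrt (le_trans hvar hle)

/-- **The composed noisy distribution deviates from the ideal diffusion path.** For every
`τ` with `0 < τ² < 1/82` there exist probability densities `p_b, p_1, p_2` on `ℝ⁴` and a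
time `t > 0` such that `W₂(N_t[q⁰], q^t) ≥ 1/2`, where `q⁰ = C[p_b, p_1, p_2]` and
`q^t = C[p_b^t, p_1^t, p_2^t]`. -/
theorem statement_16 (τ : ℝ) (hτpos : 0 < τ ^ 2) (hτ : τ ^ 2 < 1 / 82) :
    ∃ pb p1 p2 : (Fin 4 → ℝ) → ℝ,
      IsDensity pb ∧ IsDensity p1 ∧ IsDensity p2 ∧
      ∃ t : ℝ, 0 < t ∧
        (1 / 2 : ℝ) ≤
          W2 (densMeasure (noise t (comp pb ![p1, p2])))
             (densMeasure (comp (noise t pb) ![noise t p1, noise t p2])) := by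
  have h2s : (0:ℝ) < 2 - τ ^ 2 := by linarith
  have h3s : (0:ℝ) < 3 - τ ^ 2 := by linarith
  have h1s : (0:ℝ) < τ ^ 2 + 1 := by linarith
  set Z : Fin 4 → ℝ := fun _ => 0 with hZ
  set onef : Fin 4 → ℝ := fun _ => 1 with honef
  set Vτ : Fin 4 → ℝ := fun _ => τ ^ 2 with hVτ
  set M : Fin 4 → ℝ := fun i => if i = 0 then 2 else 0 with hM
  have honepos : ∀ i, (0:ℝ) < onef i := fun _ => one_pos
  have hVτpos : ∀ i, 0 < Vτ i := fun _ => hτpos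
  set l1 : Fin 4 → ℝ := fun _ => (2 - τ ^ 2) / τ ^ 2 with hl1def
  set l2 : Fin 4 → ℝ := fun _ => (3 - τ ^ 2) / (2 * (τ ^ 2 + 1)) with hl2def
  have hl1pos : ∀ i, 0 < l1 i := fun _ => div_pos h2s hτpos
  have hl2pos : ∀ i, 0 < l2 i := fun _ => div_pos h3s (by linarith)
  set ms1 : Fin 4 → ℝ := fun i => 2 * M i / (2 - τ ^ 2) with hms1
  set ms2 : Fin 4 → ℝ := fun i => 4 * M i / (3 - τ ^ 2) with hms2
  refine ⟨P Z onef, P M Vτ, P M Vτ, isDensity_P honepos Z, isDensity_P hVτpos M,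
    isDensity_P hVτpos M, 1, one_pos, ?_⟩
  -- identify q⁰
  have hcomp1 : comp (P Z onef) ![P M Vτ, P M Vτ] = P ms1 (fun i => (l1 i)⁻¹) := by
    refine comp_P honepos hVτpos hVτpos hl1pos (fun i => ?_) (fun i => ?_)
    · simp only [hl1def, hVτ, honef]
      field_simp
      norm_num
      rw [sub_div, div_self (ne_of_gt hτpos)]
    · simp only [hms1, hl1def, hVτ, honef, hZ]
      field_simp
      ring
      rw [inv_pow, mul_assoc (M i), mul_inv_cancel₀ (ne_of_gt hτpos), mul_one]
  have hw1pos : ∀ i, 0 < (l1 i)⁻¹ := fun i => inv_pos.2 (hl1pos i)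
  have hnoiseq : noise 1 (P ms1 (fun i => (l1 i)⁻¹))
      = P ms1 (fun i => (l1 i)⁻¹ + 1 ^ 2) := noise_P one_pos hw1pos ms1
  -- identify the noised densities
  have hnb : noise 1 (P Z onef) = P Z (fun i => onef i + 1 ^ 2) := noise_P one_pos honepos Z
  have hn1 : noise 1 (P M Vτ) = P M (fun i => Vτ i + 1 ^ 2) := noise_P one_pos hVτpos M
  have hvb'pos : ∀ i, (0:ℝ) < onef i + 1 ^ 2 := fun _ => by norm_num
  have hv1'pos : ∀ i, (0:ℝ) < Vτ i + 1 ^ 2 := fun _ => by simp [hVτ]; linarith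
  have hcomp2 : comp (P Z (fun i => onef i + 1 ^ 2))
      ![P M (fun i => Vτ i + 1 ^ 2), P M (fun i => Vτ i + 1 ^ 2)]
      = P ms2 (fun i => (l2 i)⁻¹) := by
    refine comp_P hvb'pos hv1'pos hv1'pos hl2pos (fun i => ?_) (fun i => ?_)
    · simp only [hl2def, hVτ, honef]
      rw [show ((1:ℝ) + 1 ^ 2) = 2 by norm_num]
      field_simp
      ring
    · simp only [hms2, hl2def, hVτ, honef, hZ]
      rw [show ((1:ℝ) + 1 ^ 2) = 2 by norm_num]
      field_simp
      ring
  rw [hcomp1, hnoiseq, hnb, hn1, hcomp2]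
  -- now a W₂ bound between product Gaussians
  have hA : ∀ i, 0 < (l1 i)⁻¹ + 1 ^ 2 := fun i => by have := hw1pos i; positivity
  have hB : ∀ i, 0 < (l2 i)⁻¹ := fun i => inv_pos.2 (hl2pos i)
  haveI : IsProbabilityMeasure (densMeasure (P ms1 (fun i => (l1 i)⁻¹ + 1 ^ 2))) :=
    isProb_densMeasure (isDensity_P hA ms1)
  haveI : IsProbabilityMeasure (densMeasure (P ms2 (fun i => (l2 i)⁻¹))) :=
    isProb_densMeasure (isDensity_P hB ms2)
  have hW := W2_ge_mean_gap (densMeasure (P ms1 (fun i => (l1 i)⁻¹ + 1 ^ 2)))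
    (densMeasure (P ms2 (fun i => (l2 i)⁻¹)))
    (integrable_coord_densP hA ms1) (integrable_coord_densP hB ms2)
    (integrable_coord_sq_densP hA ms1) (integrable_coord_sq_densP hB ms2)
  rw [integral_coord_densP hA ms1 0, integral_coord_densP hB ms2 0] at hW
  refine le_trans ?_ hW
  -- numeric bound
  have hM0 : M 0 = 2 := by simp [hM]
  have hgap : ms1 0 - ms2 0 = -((4 - 4 * τ ^ 2) / ((2 - τ ^ 2) * (3 - τ ^ 2))) := by
    simp only [hms1, hms2, hM]
    norm_num
    field_simp
    ring
  rw [hgap, abs_neg, abs_of_nonneg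
    (div_nonneg (by nlinarith) (le_of_lt (mul_pos h2s h3s)))]
  rw [le_div_iff₀ (mul_pos h2s h3s)]
  nlinarith [hτpos, hτ]
end
end
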